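/- arXiv:2305.08742 — 8 statements merged into one kernel-verified Lean document; each statement's English description precedes it below -/
import Mathlib

section
/- Let H be an n×n real symmetric positive definite matrix, let P be an n×N real matrix of full column rank N ≤ n, and let g ∈ ℝⁿ. Then gᵀ P (Pᵀ H P)⁻¹ Pᵀ g ≤ gᵀ H⁻¹ g. -/
open Matrix

/-- Let `H` be an `n×n` real symmetric positive definite matrix,
`P` an `n×N` real matrix of full column rank `N ≤ n`, and `g ∈ ℝⁿ`. Then
`gᵀ P (Pᵀ H P)⁻¹ Pᵀ g ≤ gᵀ H⁻¹ g`. -/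
theorem stmt0 {n N : ℕ} (hNn : N ≤ n)
    (H : Matrix (Fin n) (Fin n) ℝ) (hH : H.PosDef)
    (P : Matrix (Fin n) (Fin N) ℝ) (hP : P.rank = N)
    (g : Fin n → ℝ) :
    g ⬝ᵥ ((P * (Pᵀ * H * P)⁻¹ * Pᵀ) *ᵥ g) ≤ g ⬝ᵥ (H⁻¹ *ᵥ g) := by
  classical
  -- P has trivial kernel
  have hinj : ∀ x : Fin N → ℝ, x ≠ 0 → P *ᵥ x ≠ 0 := by
    have hker : LinearMap.ker P.mulVecLin = ⊥ := by
      have h1 := LinearMap.finrank_range_add_finrank_ker P.mulVecLin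
      rw [Matrix.rank] at hP
      rw [hP, Module.finrank_fin_fun] at h1
      have : Module.finrank ℝ (LinearMap.ker P.mulVecLin) = 0 := by omega
      exact Submodule.finrank_eq_zero.mp this
    intro x hx hPx
    apply hx
    have : x ∈ LinearMap.ker P.mulVecLin := LinearMap.mem_ker.mpr (by simpa using hPx)
    simpa [hker] using this
  set A := Pᵀ * H * P with hAdef
  have hA : A.PosDef := by
    refine posDef_iff_dotProduct_mulVec.mpr ⟨?_, ?_⟩
    · show Aᴴ = A
      have hHsym : Hᵀ = H := (conjTranspose_eq_transpose_of_trivial H) ▸ hH.1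
      simp only [hAdef, conjTranspose_eq_transpose_of_trivial, transpose_mul,
        transpose_transpose, hHsym, Matrix.mul_assoc]
    · intro x hx
      have : star x ⬝ᵥ A *ᵥ x = star (P *ᵥ x) ⬝ᵥ H *ᵥ (P *ᵥ x) := by
        simp only [star_trivial, hAdef, ← mulVec_mulVec, dotProduct_mulVec (v := x),
          vecMul_transpose]
      rw [this]
      exact hH.dotProduct_mulVec_pos (hinj x hx)
  have hAdet : IsUnit A.det := isUnit_iff_ne_zero.mpr hA.det_pos.ne'
  have hAinv : A⁻¹ * A = 1 := Matrix.nonsing_inv_mul A hAdet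
  -- square root of H
  open MatrixOrder in
  set S := CFC.sqrt H with hSdef
  have hSS : S * S = H := by
    open MatrixOrder in exact CFC.sqrt_mul_sqrt_self H hH.posSemidef.nonneg
  have hSsym : Sᵀ = S :=
    (conjTranspose_eq_transpose_of_trivial S) ▸ (by
      open MatrixOrder in exact (CFC.sqrt_nonneg H).posSemidef.1 : Sᴴ = S)
  have hSdet : IsUnit S.det := by
    have : S.det * S.det = H.det := by rw [← det_mul, hSS]
    refine isUnit_iff_ne_zero.mpr fun h => ?_
    rw [h, mul_zero] at this
    exact hH.det_pos.ne' this.symm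
  have hSinv : S⁻¹ * S = 1 := Matrix.nonsing_inv_mul S hSdet
  have hSinv' : S * S⁻¹ = 1 := Matrix.mul_nonsing_inv S hSdet
  have hSinvsym : (S⁻¹)ᵀ = S⁻¹ := by rw [Matrix.transpose_nonsing_inv, hSsym]
  set Q := S * (P * A⁻¹ * Pᵀ) * S with hQdef
  -- Q is idempotent
  have h1 : ∀ X : Matrix (Fin n) (Fin n) ℝ, S * (S * X) = H * X := fun X => by
    rw [← Matrix.mul_assoc, hSS]
  have h2 : ∀ X : Matrix (Fin N) (Fin n) ℝ, Pᵀ * (H * (P * X)) = A * X := fun X => by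
    rw [← Matrix.mul_assoc, ← Matrix.mul_assoc, ← hAdef]
  have h3 : ∀ X : Matrix (Fin N) (Fin n) ℝ, A⁻¹ * (A * X) = X := fun X => by
    rw [← Matrix.mul_assoc, hAinv, Matrix.one_mul]
  have hQQ : Q * Q = Q := by
    simp only [hQdef, Matrix.mul_assoc]
    rw [h1, h2, h3]
  -- Q is symmetric
  have hAsym : Aᵀ = A := (conjTranspose_eq_transpose_of_trivial A) ▸ hA.1
  have hAinvsym : (A⁻¹)ᵀ = A⁻¹ := by rw [Matrix.transpose_nonsing_inv, hAsym]
  have hQsym : Qᵀ = Q := by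
    simp only [hQdef, transpose_mul, transpose_transpose, hSsym, hAinvsym, Matrix.mul_assoc]
  -- 1 - Q is positive semidefinite
  set B : Matrix (Fin n) (Fin n) ℝ := 1 - Q with hBdef
  have hBsym : Bᵀ = B := by simp [hBdef, transpose_sub, hQsym]
  have hBB : B * B = B := by
    simp only [hBdef, Matrix.sub_mul, Matrix.mul_sub, Matrix.one_mul, Matrix.mul_one, hQQ]
    abel
  have hBpsd : B.PosSemidef := by
    have h := posSemidef_conjTranspose_mul_self B
    rwa [conjTranspose_eq_transpose_of_trivial, hBsym, hBB] at h
  -- key matrix identity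
  have hkey : H⁻¹ - P * A⁻¹ * Pᵀ = S⁻¹ * B * S⁻¹ := by
    have e1 : S⁻¹ * Q * S⁻¹ = P * A⁻¹ * Pᵀ := by
      rw [hQdef, ← Matrix.mul_assoc, ← Matrix.mul_assoc, hSinv, Matrix.one_mul,
        Matrix.mul_assoc, hSinv', Matrix.mul_one]
    have e2 : H⁻¹ = S⁻¹ * S⁻¹ := by rw [← hSS, Matrix.mul_inv_rev]
    rw [Matrix.mul_sub, Matrix.sub_mul, Matrix.mul_one, e1, e2]
  -- conclude
  set y := S⁻¹ *ᵥ g with hydef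
  have hpos : 0 ≤ g ⬝ᵥ ((S⁻¹ * B * S⁻¹) *ᵥ g) := by
    have : g ⬝ᵥ ((S⁻¹ * B * S⁻¹) *ᵥ g) = y ⬝ᵥ B *ᵥ y := by
      rw [hydef, ← mulVec_mulVec, ← mulVec_mulVec, dotProduct_mulVec (v := g),
        ← hSinvsym, vecMul_transpose, hSinvsym]
    rw [this]
    simpa using hBpsd.dotProduct_mulVec_nonneg y
  have := hkey ▸ hpos
  rw [Matrix.sub_mulVec, dotProduct_sub] at this
  linarith
end

section
/- With the truncated approximation Q of A one has (σ_n/σ_{N+1}) · gᵀ A⁻¹ g ≤ gᵀ Q⁻¹ g ≤ gᵀ A⁻¹ g, i.e., √(σ_n/σ_{N+1}) · λ ≤ λ̄ ≤ λ. -/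
open Matrix

/-- With the truncated approximation `Q` of `A` one has
`(σ_n/σ_{N+1}) · gᵀ A⁻¹ g ≤ gᵀ Q⁻¹ g ≤ gᵀ A⁻¹ g`, i.e.
`√(σ_n/σ_{N+1}) · λ ≤ λ̄ ≤ λ`.  (`A` is symmetric positive definite with
eigenvalues `σ_1 ≥ … ≥ σ_n > 0` and orthonormal eigenvectors `u_1, …, u_n`;
`Q` has the same eigenvectors, with eigenvalues `σ_i` for `i ≤ N` and
`σ_{N+1}` for `i > N`; here indices are 0-based, so `σ_{N+1}` is `σ ⟨N, _⟩`
and `σ_n` is `σ ⟨n-1, _⟩`.) -/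
theorem stmt1 {n N : ℕ} (hN : 1 ≤ N) (hNn : N < n)
    (A Q : Matrix (Fin n) (Fin n) ℝ) (hA : A.PosDef)
    (σ : Fin n → ℝ) (u : Fin n → Fin n → ℝ)
    (hσpos : ∀ i, 0 < σ i)
    (hσmono : ∀ i j : Fin n, i ≤ j → σ j ≤ σ i)
    (hortho : ∀ i j : Fin n, u i ⬝ᵥ u j = if i = j then (1 : ℝ) else 0)
    (hAeig : ∀ i, A *ᵥ u i = σ i • u i)
    (hQsymm : Q.IsSymm)
    (hQeig : ∀ i : Fin n, Q *ᵥ u i = (if (i : ℕ) < N then σ i else σ ⟨N, hNn⟩) • u i)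
    (g : Fin n → ℝ) :
    (σ ⟨n - 1, by omega⟩ / σ ⟨N, hNn⟩) * (g ⬝ᵥ (A⁻¹ *ᵥ g)) ≤ g ⬝ᵥ (Q⁻¹ *ᵥ g) ∧
    g ⬝ᵥ (Q⁻¹ *ᵥ g) ≤ g ⬝ᵥ (A⁻¹ *ᵥ g) ∧
    Real.sqrt (σ ⟨n - 1, by omega⟩ / σ ⟨N, hNn⟩) * Real.sqrt (g ⬝ᵥ (A⁻¹ *ᵥ g))
        ≤ Real.sqrt (g ⬝ᵥ (Q⁻¹ *ᵥ g)) ∧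
    Real.sqrt (g ⬝ᵥ (Q⁻¹ *ᵥ g)) ≤ Real.sqrt (g ⬝ᵥ (A⁻¹ *ᵥ g)) := by
  classical
  set P : Matrix (Fin n) (Fin n) ℝ := Matrix.of (fun i j => u j i) with hPdef
  have hPtP : Pᵀ * P = 1 := by
    ext i j
    have := hortho i j
    simpa [Matrix.mul_apply, dotProduct, Matrix.one_apply, hPdef] using this
  have hPPt : P * Pᵀ = 1 := mul_eq_one_comm.mp hPtP
  set τ : Fin n → ℝ := fun i => if (i : ℕ) < N then σ i else σ ⟨N, hNn⟩ with hτdef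
  have hτpos : ∀ i, 0 < τ i := by
    intro i; by_cases h : (i : ℕ) < N <;> simp [hτdef, h, hσpos]
  have key : ∀ (M : Matrix (Fin n) (Fin n) ℝ) (w : Fin n → ℝ),
      (∀ i, w i ≠ 0) → (∀ i, M *ᵥ u i = w i • u i) →
      M⁻¹ = P * Matrix.diagonal (fun i => (w i)⁻¹) * Pᵀ := by
    intro M w hw hMe
    apply Matrix.inv_eq_right_inv
    have hMP : M * P = P * Matrix.diagonal w := by
      ext i j
      have := congrFun (hMe j) i
      simp [Matrix.mulVec, dotProduct] at this
      simp [Matrix.mul_apply, hPdef, Matrix.diagonal]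
      rw [this, mul_comm]
    calc M * (P * Matrix.diagonal (fun i => (w i)⁻¹) * Pᵀ)
        = (M * P) * Matrix.diagonal (fun i => (w i)⁻¹) * Pᵀ := by
          simp [Matrix.mul_assoc]
      _ = P * (Matrix.diagonal w * Matrix.diagonal (fun i => (w i)⁻¹)) * Pᵀ := by
          rw [hMP]; simp [Matrix.mul_assoc]
      _ = P * Pᵀ := by
          rw [Matrix.diagonal_mul_diagonal]
          have : (fun i => w i * (w i)⁻¹) = fun _ => (1 : ℝ) := by
            funext i; exact mul_inv_cancel₀ (hw i)
          rw [this]; simp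
      _ = 1 := hPPt
  have hAinv : A⁻¹ = P * Matrix.diagonal (fun i => (σ i)⁻¹) * Pᵀ :=
    key A σ (fun i => (hσpos i).ne') hAeig
  have hQinv : Q⁻¹ = P * Matrix.diagonal (fun i => (τ i)⁻¹) * Pᵀ :=
    key Q τ (fun i => (hτpos i).ne') hQeig
  set c : Fin n → ℝ := Pᵀ *ᵥ g with hcdef
  have hform : ∀ w : Fin n → ℝ,
      g ⬝ᵥ ((P * Matrix.diagonal w * Pᵀ) *ᵥ g) = ∑ i, w i * (c i) ^ 2 := by
    intro w
    rw [← Matrix.mulVec_mulVec, ← Matrix.mulVec_mulVec, Matrix.dotProduct_mulVec]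
    have hgP : g ᵥ* P = c := by
      rw [hcdef, Matrix.mulVec_transpose]
    rw [hgP]
    simp [dotProduct, Matrix.mulVec_diagonal]
    apply Finset.sum_congr rfl
    intro i _
    ring
  have hqA : g ⬝ᵥ (A⁻¹ *ᵥ g) = ∑ i, (σ i)⁻¹ * (c i) ^ 2 := by
    rw [hAinv]; exact hform _
  have hqQ : g ⬝ᵥ (Q⁻¹ *ᵥ g) = ∑ i, (τ i)⁻¹ * (c i) ^ 2 := by
    rw [hQinv]; exact hform _
  have hσlast : ∀ i : Fin n, σ ⟨n - 1, by omega⟩ ≤ σ i := by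
    intro i
    refine hσmono i ⟨n - 1, by omega⟩ ?_
    rw [Fin.le_def]
    show (i : ℕ) ≤ n - 1
    omega
  have hrpos : 0 < σ ⟨n - 1, by omega⟩ / σ ⟨N, hNn⟩ :=
    div_pos (hσpos _) (hσpos _)
  have hupper : g ⬝ᵥ (Q⁻¹ *ᵥ g) ≤ g ⬝ᵥ (A⁻¹ *ᵥ g) := by
    rw [hqA, hqQ]
    apply Finset.sum_le_sum
    intro i _
    apply mul_le_mul_of_nonneg_right _ (sq_nonneg _)
    apply inv_anti₀ (hσpos i)
    by_cases h : (i : ℕ) < N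
    · simp [hτdef, h]
    · simp only [hτdef, h, if_false]
      refine hσmono ⟨N, hNn⟩ i ?_
      rw [Fin.le_def]
      show N ≤ (i : ℕ)
      omega
  have hlower : (σ ⟨n - 1, by omega⟩ / σ ⟨N, hNn⟩) * (g ⬝ᵥ (A⁻¹ *ᵥ g)) ≤
      g ⬝ᵥ (Q⁻¹ *ᵥ g) := by
    rw [hqA, hqQ, Finset.mul_sum]
    apply Finset.sum_le_sum
    intro i _
    rw [← mul_assoc]
    apply mul_le_mul_of_nonneg_right _ (sq_nonneg _)
    by_cases h : (i : ℕ) < N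
    · simp only [hτdef, h, if_true]
      have h1 : σ ⟨n - 1, by omega⟩ / σ ⟨N, hNn⟩ ≤ 1 := by
        rw [div_le_one (hσpos _)]
        exact hσlast _
      calc σ ⟨n - 1, by omega⟩ / σ ⟨N, hNn⟩ * (σ i)⁻¹ ≤ 1 * (σ i)⁻¹ :=
            mul_le_mul_of_nonneg_right h1 (inv_nonneg.mpr (hσpos i).le)
        _ = (σ i)⁻¹ := one_mul _
    · simp only [hτdef, h, if_false]
      have hinv : (σ i)⁻¹ ≤ (σ ⟨n - 1, by omega⟩)⁻¹ :=
        inv_anti₀ (hσpos _) (hσlast i)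
      have hx : σ ⟨n - 1, by omega⟩ ≠ 0 := (hσpos _).ne'
      have hy : σ ⟨N, hNn⟩ ≠ 0 := (hσpos _).ne'
      calc σ ⟨n - 1, by omega⟩ / σ ⟨N, hNn⟩ * (σ i)⁻¹
          ≤ σ ⟨n - 1, by omega⟩ / σ ⟨N, hNn⟩ * (σ ⟨n - 1, by omega⟩)⁻¹ :=
            mul_le_mul_of_nonneg_left hinv hrpos.le
        _ = (σ ⟨N, hNn⟩)⁻¹ := by field_simp
  refine ⟨hlower, hupper, ?_, Real.sqrt_le_sqrt hupper⟩
  rw [← Real.sqrt_mul hrpos.le]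
  exact Real.sqrt_le_sqrt hlower
end

section
/- With the coarse truncated approximation Q of H_r one has (σ_N/σ_{p+1}) · λ̃² ≤ λ̂² ≤ λ̃² ≤ λ², i.e., √(σ_N/σ_{p+1}) · λ̃ ≤ λ̂ ≤ λ̃ ≤ λ. -/
open Matrix


lemma eig_rightInv {N : ℕ} (U M : Matrix (Fin N) (Fin N) ℝ) (d : Fin N → ℝ)
    (hU : U * Uᵀ = 1) (hM : M * Uᵀ = Uᵀ * Matrix.diagonal d)
    (hd : ∀ i, d i ≠ 0) :
    M * (Uᵀ * Matrix.diagonal (fun i => (d i)⁻¹) * U) = 1 := by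
  have hUtU : Uᵀ * U = 1 := mul_eq_one_comm.mp hU
  calc M * (Uᵀ * Matrix.diagonal (fun i => (d i)⁻¹) * U)
      = (M * Uᵀ) * Matrix.diagonal (fun i => (d i)⁻¹) * U := by
        simp only [Matrix.mul_assoc]
    _ = Uᵀ * (Matrix.diagonal d * Matrix.diagonal (fun i => (d i)⁻¹)) * U := by
        rw [hM]; simp only [Matrix.mul_assoc]
    _ = Uᵀ * U := by
        rw [Matrix.diagonal_mul_diagonal]
        have : (fun i => d i * (d i)⁻¹) = fun _ => (1:ℝ) := by
          funext i; exact mul_inv_cancel₀ (hd i)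
        rw [this, Matrix.diagonal_one, Matrix.mul_one]
    _ = 1 := hUtU

lemma quad_inv_eig {N : ℕ} (U M : Matrix (Fin N) (Fin N) ℝ) (d : Fin N → ℝ)
    (hU : U * Uᵀ = 1) (hM : M * Uᵀ = Uᵀ * Matrix.diagonal d)
    (hd : ∀ i, d i ≠ 0) (v : Fin N → ℝ) :
    v ⬝ᵥ (M⁻¹ *ᵥ v) = ∑ i, (d i)⁻¹ * ((U *ᵥ v) i)^2 := by
  have hMinv : M⁻¹ = Uᵀ * Matrix.diagonal (fun i => (d i)⁻¹) * U :=
    Matrix.inv_eq_right_inv (eig_rightInv U M d hU hM hd)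
  rw [hMinv]
  rw [show Uᵀ * Matrix.diagonal (fun i => (d i)⁻¹) * U = Uᵀ * (Matrix.diagonal (fun i => (d i)⁻¹) * U) from by rw [Matrix.mul_assoc]]
  rw [← Matrix.mulVec_mulVec, ← Matrix.mulVec_mulVec]
  rw [Matrix.dotProduct_mulVec, Matrix.vecMul_transpose]
  simp [dotProduct, Matrix.mulVec_diagonal]
  exact Finset.sum_congr rfl (fun i _ => by ring)

/-- With the coarse truncated approximation `Q` of
`H_r := Pᵀ H P` one has `(σ_N/σ_{p+1}) · λ̃² ≤ λ̂² ≤ λ̃² ≤ λ²`, i.e.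
`√(σ_N/σ_{p+1}) · λ̃ ≤ λ̂ ≤ λ̃ ≤ λ`, where
`λ² = gᵀ H⁻¹ g`, `λ̃² = gᵀ P H_r⁻¹ Pᵀ g`, `λ̂² = gᵀ P Q⁻¹ Pᵀ g`.
(`H_r` has eigenvalues `σ_1 ≥ … ≥ σ_N > 0` with orthonormal eigenvectors `u_i`;
`Q` keeps `σ_1, …, σ_p` and replaces the rest by `σ_{p+1}`; indices 0-based.) -/
theorem stmt5 {n N p : ℕ} (hp : 1 ≤ p) (hpN : p < N) (hNn : N < n)
    (H : Matrix (Fin n) (Fin n) ℝ) (hH : H.PosDef)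
    (P : Matrix (Fin n) (Fin N) ℝ) (hP : P.rank = N)
    (σ : Fin N → ℝ) (u : Fin N → Fin N → ℝ)
    (hσpos : ∀ i, 0 < σ i)
    (hσmono : ∀ i j : Fin N, i ≤ j → σ j ≤ σ i)
    (hortho : ∀ i j : Fin N, u i ⬝ᵥ u j = if i = j then (1 : ℝ) else 0)
    (hHreig : ∀ i, (Pᵀ * H * P) *ᵥ u i = σ i • u i)
    (Q : Matrix (Fin N) (Fin N) ℝ) (hQsymm : Q.IsSymm)
    (hQeig : ∀ i : Fin N, Q *ᵥ u i = (if (i : ℕ) < p then σ i else σ ⟨p, hpN⟩) • u i)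
    (g : Fin n → ℝ) :
    σ ⟨N - 1, by omega⟩ / σ ⟨p, hpN⟩ * ((Pᵀ *ᵥ g) ⬝ᵥ ((Pᵀ * H * P)⁻¹ *ᵥ (Pᵀ *ᵥ g)))
        ≤ (Pᵀ *ᵥ g) ⬝ᵥ (Q⁻¹ *ᵥ (Pᵀ *ᵥ g)) ∧
    (Pᵀ *ᵥ g) ⬝ᵥ (Q⁻¹ *ᵥ (Pᵀ *ᵥ g)) ≤ (Pᵀ *ᵥ g) ⬝ᵥ ((Pᵀ * H * P)⁻¹ *ᵥ (Pᵀ *ᵥ g)) ∧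
    (Pᵀ *ᵥ g) ⬝ᵥ ((Pᵀ * H * P)⁻¹ *ᵥ (Pᵀ *ᵥ g)) ≤ g ⬝ᵥ (H⁻¹ *ᵥ g) := by
  set Hr := Pᵀ * H * P with hHrdef
  set v := Pᵀ *ᵥ g with hvdef
  set U : Matrix (Fin N) (Fin N) ℝ := Matrix.of u with hUdef
  set τ : Fin N → ℝ := fun i => if (i : ℕ) < p then σ i else σ ⟨p, hpN⟩ with hτdef
  have hτpos : ∀ i, 0 < τ i := by
    intro i; simp only [hτdef]; split <;> exact hσpos _
  have hUUt : U * Uᵀ = 1 := by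
    ext i j
    have := hortho i j
    simpa [Matrix.mul_apply, dotProduct, Matrix.one_apply, hUdef] using this
  -- eigen relations in matrix form
  have hHrU : Hr * Uᵀ = Uᵀ * Matrix.diagonal σ := by
    ext i j
    have h1 := congrFun (hHreig j) i
    simp only [Matrix.mulVec, dotProduct, Pi.smul_apply, smul_eq_mul] at h1
    rw [Matrix.mul_apply, Matrix.mul_diagonal]
    simp only [Matrix.transpose_apply, hUdef, Matrix.of_apply]
    rw [h1]; ring
  have hQU : Q * Uᵀ = Uᵀ * Matrix.diagonal τ := by
    ext i j
    have h1 := congrFun (hQeig j) i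
    simp only [Matrix.mulVec, dotProduct, Pi.smul_apply, smul_eq_mul] at h1
    rw [Matrix.mul_apply, Matrix.mul_diagonal]
    simp only [Matrix.transpose_apply, hUdef, Matrix.of_apply]
    rw [show τ j = (if (j : ℕ) < p then σ j else σ ⟨p, hpN⟩) from rfl, h1]; ring
  have hσne : ∀ i, σ i ≠ 0 := fun i => (hσpos i).ne'
  have hτne : ∀ i, τ i ≠ 0 := fun i => (hτpos i).ne'
  have hqHr : v ⬝ᵥ (Hr⁻¹ *ᵥ v) = ∑ i, (σ i)⁻¹ * ((U *ᵥ v) i)^2 :=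
    quad_inv_eig U Hr σ hUUt hHrU hσne v
  have hqQ : v ⬝ᵥ (Q⁻¹ *ᵥ v) = ∑ i, (τ i)⁻¹ * ((U *ᵥ v) i)^2 :=
    quad_inv_eig U Q τ hUUt hQU hτne v
  set c := U *ᵥ v with hcdef
  -- σ ≤ τ pointwise
  have hστ : ∀ i, σ i ≤ τ i := by
    intro i
    simp only [hτdef]
    split
    · exact le_refl _
    · next h => exact hσmono ⟨p, hpN⟩ i (by simpa [Fin.le_def] using Nat.le_of_not_lt h)
  refine ⟨?_, ?_, ?_⟩
  · -- first inequality
    rw [hqHr, hqQ, Finset.mul_sum]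
    apply Finset.sum_le_sum
    intro i _
    have hkey : σ ⟨N - 1, by omega⟩ * τ i ≤ σ ⟨p, hpN⟩ * σ i := by
      simp only [hτdef]
      split
      · next h =>
        have h1 : σ ⟨N - 1, by omega⟩ ≤ σ ⟨p, hpN⟩ :=
          hσmono ⟨p, hpN⟩ ⟨N - 1, by omega⟩ (by simp [Fin.le_def]; omega)
        nlinarith [hσpos i, hσpos ⟨p, hpN⟩]
      · next h =>
        have h1 : σ ⟨N - 1, by omega⟩ ≤ σ i :=
          hσmono i ⟨N - 1, by omega⟩ (by simp [Fin.le_def]; omega)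
        nlinarith [hσpos ⟨p, hpN⟩, hσpos i]
    have hfrac : σ ⟨N - 1, by omega⟩ / σ ⟨p, hpN⟩ * (σ i)⁻¹ ≤ (τ i)⁻¹ := by
      rw [inv_eq_one_div, inv_eq_one_div, div_mul_div_comm,
        div_le_div_iff₀ (mul_pos (hσpos ⟨p, hpN⟩) (hσpos i)) (hτpos i)]
      nlinarith [hkey]
    calc σ ⟨N - 1, by omega⟩ / σ ⟨p, hpN⟩ * ((σ i)⁻¹ * (c i)^2)
        = (σ ⟨N - 1, by omega⟩ / σ ⟨p, hpN⟩ * (σ i)⁻¹) * (c i)^2 := by ring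
      _ ≤ (τ i)⁻¹ * (c i)^2 := mul_le_mul_of_nonneg_right hfrac (sq_nonneg _)
  · -- second inequality
    rw [hqHr, hqQ]
    apply Finset.sum_le_sum
    intro i _
    have : (τ i)⁻¹ ≤ (σ i)⁻¹ := inv_anti₀ (hσpos i) (hστ i)
    exact mul_le_mul_of_nonneg_right this (sq_nonneg _)
  · -- third inequality
    have hHsymm : Hᵀ = H := by
      have := hH.1
      ext i j
      rw [Matrix.transpose_apply]
      simpa using congrFun (congrFun this i) j
    have hHinv : H * H⁻¹ = 1 := Matrix.mul_nonsing_inv H (isUnit_iff_ne_zero.mpr hH.det_pos.ne')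
    have hHrInv : Hr * Hr⁻¹ = 1 := by
      rw [Matrix.inv_eq_right_inv (eig_rightInv U Hr σ hUUt hHrU hσne)]
      exact eig_rightInv U Hr σ hUUt hHrU hσne
    set h := H⁻¹ *ᵥ g with hhdef
    set y := Hr⁻¹ *ᵥ v with hydef
    set x := P *ᵥ y with hxdef
    have hHh : H *ᵥ h = g := by
      rw [hhdef, Matrix.mulVec_mulVec, hHinv, Matrix.one_mulVec]
    have hHry : Hr *ᵥ y = v := by
      rw [hydef, Matrix.mulVec_mulVec, hHrInv, Matrix.one_mulVec]
    -- x ⬝ H x = y ⬝ v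
    have hxHx : x ⬝ᵥ (H *ᵥ x) = y ⬝ᵥ v := by
      rw [hxdef, show (P *ᵥ y) ⬝ᵥ (H *ᵥ (P *ᵥ y)) = y ⬝ᵥ (Pᵀ *ᵥ (H *ᵥ (P *ᵥ y))) from by
        rw [Matrix.dotProduct_mulVec y, Matrix.vecMul_transpose]]
      rw [Matrix.mulVec_mulVec, Matrix.mulVec_mulVec, ← hHrdef, hHry]
    have hxg : x ⬝ᵥ g = y ⬝ᵥ v := by
      rw [hxdef, show (P *ᵥ y) ⬝ᵥ g = y ⬝ᵥ (Pᵀ *ᵥ g) from by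
        rw [Matrix.dotProduct_mulVec y, Matrix.vecMul_transpose], ← hvdef]
    have hxHh : x ⬝ᵥ (H *ᵥ h) = y ⬝ᵥ v := by rw [hHh, hxg]
    have hhHx : h ⬝ᵥ (H *ᵥ x) = y ⬝ᵥ v := by
      rw [Matrix.dotProduct_mulVec h, show h ᵥ* H = H *ᵥ h from by
        rw [← hHsymm, Matrix.vecMul_transpose, hHsymm], hHh]
      rw [dotProduct_comm, hxg]
    have hhHh : h ⬝ᵥ (H *ᵥ h) = g ⬝ᵥ h := by rw [hHh, dotProduct_comm]
    have hpos : 0 ≤ (x - h) ⬝ᵥ (H *ᵥ (x - h)) := by simpa using hH.posSemidef.dotProduct_mulVec_nonneg (x - h)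
    have hexp : (x - h) ⬝ᵥ (H *ᵥ (x - h)) =
        x ⬝ᵥ (H *ᵥ x) - x ⬝ᵥ (H *ᵥ h) - h ⬝ᵥ (H *ᵥ x) + h ⬝ᵥ (H *ᵥ h) := by
      rw [Matrix.mulVec_sub]
      simp [sub_dotProduct, dotProduct_sub]
      ring
    have hfin : 0 ≤ g ⬝ᵥ h - y ⬝ᵥ v := by
      have h2 := hpos
      rw [hexp, hxHx, hxHh, hhHx, hhHh] at h2
      linarith
    have : v ⬝ᵥ y = y ⬝ᵥ v := dotProduct_comm v y
    linarith
end

section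
/- With the coarse truncated approximation Q of H_r, d := −H⁻¹ g and d̂ := −P Q⁻¹ Pᵀ g, one has dᵀ H d̂ = λ̂² and d̂ᵀ H d̂ ≤ λ̂². -/
open Matrix

private lemma dot_aux {m k : ℕ} (A : Matrix (Fin m) (Fin k) ℝ) (x : Fin k → ℝ)
    (y : Fin m → ℝ) : (A *ᵥ x) ⬝ᵥ y = x ⬝ᵥ (Aᵀ *ᵥ y) := by
  rw [dotProduct_mulVec, vecMul_transpose]

/-- With the coarse truncated approximation `Q` of
`H_r := Pᵀ H P`, `d := −H⁻¹ g` and `d̂ := −P Q⁻¹ Pᵀ g`, one has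
`dᵀ H d̂ = λ̂²` and `d̂ᵀ H d̂ ≤ λ̂²`, where `λ̂² = gᵀ P Q⁻¹ Pᵀ g`. -/
theorem stmt6 {n N p : ℕ} (hp : 1 ≤ p) (hpN : p < N) (hNn : N < n)
    (H : Matrix (Fin n) (Fin n) ℝ) (hH : H.PosDef)
    (P : Matrix (Fin n) (Fin N) ℝ) (hP : P.rank = N)
    (σ : Fin N → ℝ) (u : Fin N → Fin N → ℝ)
    (hσpos : ∀ i, 0 < σ i)
    (hσmono : ∀ i j : Fin N, i ≤ j → σ j ≤ σ i)
    (hortho : ∀ i j : Fin N, u i ⬝ᵥ u j = if i = j then (1 : ℝ) else 0)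
    (hHreig : ∀ i, (Pᵀ * H * P) *ᵥ u i = σ i • u i)
    (Q : Matrix (Fin N) (Fin N) ℝ) (hQsymm : Q.IsSymm)
    (hQeig : ∀ i : Fin N, Q *ᵥ u i = (if (i : ℕ) < p then σ i else σ ⟨p, hpN⟩) • u i)
    (g : Fin n → ℝ) :
    (-(H⁻¹ *ᵥ g)) ⬝ᵥ (H *ᵥ -(P *ᵥ (Q⁻¹ *ᵥ (Pᵀ *ᵥ g))))
        = (Pᵀ *ᵥ g) ⬝ᵥ (Q⁻¹ *ᵥ (Pᵀ *ᵥ g)) ∧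
    (-(P *ᵥ (Q⁻¹ *ᵥ (Pᵀ *ᵥ g)))) ⬝ᵥ (H *ᵥ -(P *ᵥ (Q⁻¹ *ᵥ (Pᵀ *ᵥ g))))
        ≤ (Pᵀ *ᵥ g) ⬝ᵥ (Q⁻¹ *ᵥ (Pᵀ *ᵥ g)) := by
  set τ : Fin N → ℝ := fun i => if (i : ℕ) < p then σ i else σ ⟨p, hpN⟩ with hτ
  have hτpos : ∀ i, 0 < τ i := by
    intro i; simp only [hτ]; split <;> exact hσpos _
  set U : Matrix (Fin N) (Fin N) ℝ := Matrix.of u with hU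
  have hUUt : U * Uᵀ = 1 := by
    ext i j
    simpa [Matrix.mul_apply, Matrix.one_apply, dotProduct, hU] using hortho i j
  have hUtU : Uᵀ * U = 1 := mul_eq_one_comm.mp hUUt
  -- decomposition helper
  have decomp : ∀ (M : Matrix (Fin N) (Fin N) ℝ) (e : Fin N → ℝ),
      (∀ i, M *ᵥ u i = e i • u i) → M = Uᵀ * Matrix.diagonal e * U := by
    intro M e he
    have h1 : M * Uᵀ = Uᵀ * Matrix.diagonal e := by
      ext i j
      have : (M * Uᵀ) i j = (M *ᵥ u j) i := by
        simp [Matrix.mul_apply, Matrix.mulVec, dotProduct, hU]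
      rw [this, he j]
      simp [Matrix.mul_diagonal, hU, mul_comm]
    calc M = M * (Uᵀ * U) := by rw [hUtU, Matrix.mul_one]
    _ = (M * Uᵀ) * U := by rw [Matrix.mul_assoc]
    _ = Uᵀ * Matrix.diagonal e * U := by rw [h1]
  have hQdec : Q = Uᵀ * Matrix.diagonal τ * U := decomp Q τ hQeig
  have hHrdec : Pᵀ * H * P = Uᵀ * Matrix.diagonal σ * U := decomp _ σ hHreig
  -- Q is invertible
  have hQright : Q * (Uᵀ * Matrix.diagonal (fun i => (τ i)⁻¹) * U) = 1 := by
    rw [hQdec]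
    calc Uᵀ * Matrix.diagonal τ * U * (Uᵀ * Matrix.diagonal (fun i => (τ i)⁻¹) * U)
        = Uᵀ * Matrix.diagonal τ * (U * Uᵀ) * Matrix.diagonal (fun i => (τ i)⁻¹) * U := by
          simp only [Matrix.mul_assoc]
      _ = Uᵀ * (Matrix.diagonal τ * Matrix.diagonal (fun i => (τ i)⁻¹)) * U := by
          rw [hUUt]; simp only [Matrix.mul_one, Matrix.mul_assoc]
      _ = Uᵀ * U := by
          rw [Matrix.diagonal_mul_diagonal]
          have : (fun i => τ i * (τ i)⁻¹) = fun _ => (1 : ℝ) := by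
            funext i; exact mul_inv_cancel₀ (hτpos i).ne'
          rw [this, Matrix.diagonal_one, Matrix.mul_one]
      _ = 1 := hUtU
  have hQdet : IsUnit Q.det := Matrix.isUnit_det_of_right_inverse hQright
  have hQQinv : Q * Q⁻¹ = 1 := Matrix.mul_nonsing_inv Q hQdet
  set w : Fin N → ℝ := Q⁻¹ *ᵥ (Pᵀ *ᵥ g) with hw
  have hQw : Q *ᵥ w = Pᵀ *ᵥ g := by
    rw [hw, Matrix.mulVec_mulVec, hQQinv, Matrix.one_mulVec]
  have hHsymm : Hᵀ = H := hH.isHermitian.eq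
  have hHdet : IsUnit H.det := isUnit_iff_ne_zero.mpr hH.det_pos.ne'
  constructor
  · -- first part
    rw [Matrix.mulVec_neg, dotProduct_neg, neg_dotProduct, neg_neg,
      dot_aux H⁻¹ g _]
    rw [show (H⁻¹)ᵀ = H⁻¹ by rw [Matrix.transpose_nonsing_inv, hHsymm]]
    rw [Matrix.mulVec_mulVec, Matrix.nonsing_inv_mul H hHdet, Matrix.one_mulVec]
    rw [dotProduct_comm, dot_aux, dotProduct_comm]
  · -- second part
    rw [Matrix.mulVec_neg, dotProduct_neg, neg_dotProduct, neg_neg]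
    have hL : (P *ᵥ w) ⬝ᵥ (H *ᵥ (P *ᵥ w)) = w ⬝ᵥ ((Pᵀ * H * P) *ᵥ w) := by
      rw [dot_aux, Matrix.mulVec_mulVec, Matrix.mulVec_mulVec]
    have hR : (Pᵀ *ᵥ g) ⬝ᵥ w = w ⬝ᵥ (Q *ᵥ w) := by
      rw [← hQw, dotProduct_comm]
    rw [hL, hR]
    have hdiff : Q - Pᵀ * H * P = Uᵀ * Matrix.diagonal (fun i => τ i - σ i) * U := by
      rw [hQdec, hHrdec, ← Matrix.sub_mul, ← Matrix.mul_sub, Matrix.diagonal_sub]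
    have key : 0 ≤ w ⬝ᵥ ((Q - Pᵀ * H * P) *ᵥ w) := by
      rw [hdiff, ← Matrix.mulVec_mulVec, ← Matrix.mulVec_mulVec, ← dot_aux U w]
      set c : Fin N → ℝ := U *ᵥ w
      have : c ⬝ᵥ (Matrix.diagonal (fun i => τ i - σ i) *ᵥ c)
          = ∑ i, (τ i - σ i) * c i ^ 2 := by
        simp [dotProduct, Matrix.mulVec_diagonal]
        congr 1; funext i; ring
      rw [this]
      apply Finset.sum_nonneg
      intro i _
      have he : 0 ≤ τ i - σ i := by
        simp only [hτ]
        by_cases hip : (i : ℕ) < p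
        · simp [hip]
        · simp only [hip, if_false]
          have : (⟨p, hpN⟩ : Fin N) ≤ i := by
            exact Fin.mk_le_of_le_val (Nat.le_of_not_lt hip)
          linarith [hσmono _ _ this]
      exact mul_nonneg he (sq_nonneg _)
    rw [Matrix.sub_mulVec, dotProduct_sub] at key
    linarith
end

section
/- With the coarse truncated approximation Q of H_r, d := −H⁻¹ g and d̂ := −P Q⁻¹ Pᵀ g, one has ‖H^{1/2} (d − d̂)‖₂² ≤ λ² − λ̂², i.e., ‖H^{1/2} (d − d̂)‖₂ ≤ √(λ² − λ̂²). -/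
open Matrix

/-- With the coarse truncated approximation `Q` of
`H_r := Pᵀ H P`, `d := −H⁻¹ g` and `d̂ := −P Q⁻¹ Pᵀ g`, one has
`‖H^{1/2} (d − d̂)‖₂² ≤ λ² − λ̂²`, i.e. `‖H^{1/2} (d − d̂)‖₂ ≤ √(λ² − λ̂²)`.
`S` denotes the positive definite square root of `H` and `‖v‖₂ = √(v ⬝ᵥ v)`. -/
theorem stmt7 {n N p : ℕ} (hp : 1 ≤ p) (hpN : p < N) (hNn : N < n)
    (H : Matrix (Fin n) (Fin n) ℝ) (hH : H.PosDef)
    (P : Matrix (Fin n) (Fin N) ℝ) (hP : P.rank = N)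
    (σ : Fin N → ℝ) (u : Fin N → Fin N → ℝ)
    (hσpos : ∀ i, 0 < σ i)
    (hσmono : ∀ i j : Fin N, i ≤ j → σ j ≤ σ i)
    (hortho : ∀ i j : Fin N, u i ⬝ᵥ u j = if i = j then (1 : ℝ) else 0)
    (hHreig : ∀ i, (Pᵀ * H * P) *ᵥ u i = σ i • u i)
    (Q : Matrix (Fin N) (Fin N) ℝ) (hQsymm : Q.IsSymm)
    (hQeig : ∀ i : Fin N, Q *ᵥ u i = (if (i : ℕ) < p then σ i else σ ⟨p, hpN⟩) • u i)
    (S : Matrix (Fin n) (Fin n) ℝ) (hS : S.PosDef) (hSS : S * S = H)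
    (g : Fin n → ℝ) :
    (S *ᵥ (-(H⁻¹ *ᵥ g) - -(P *ᵥ (Q⁻¹ *ᵥ (Pᵀ *ᵥ g)))))
        ⬝ᵥ (S *ᵥ (-(H⁻¹ *ᵥ g) - -(P *ᵥ (Q⁻¹ *ᵥ (Pᵀ *ᵥ g)))))
      ≤ g ⬝ᵥ (H⁻¹ *ᵥ g) - (Pᵀ *ᵥ g) ⬝ᵥ (Q⁻¹ *ᵥ (Pᵀ *ᵥ g)) ∧
    Real.sqrt ((S *ᵥ (-(H⁻¹ *ᵥ g) - -(P *ᵥ (Q⁻¹ *ᵥ (Pᵀ *ᵥ g)))))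
        ⬝ᵥ (S *ᵥ (-(H⁻¹ *ᵥ g) - -(P *ᵥ (Q⁻¹ *ᵥ (Pᵀ *ᵥ g))))))
      ≤ Real.sqrt (g ⬝ᵥ (H⁻¹ *ᵥ g) - (Pᵀ *ᵥ g) ⬝ᵥ (Q⁻¹ *ᵥ (Pᵀ *ᵥ g))) := by
  classical
  -- the modified eigenvalues
  set q : Fin N → ℝ := fun i => if (i : ℕ) < p then σ i else σ ⟨p, hpN⟩ with hqdef
  have hqpos : ∀ i, 0 < q i := by
    intro i; by_cases h : (i : ℕ) < p <;> simp [hqdef, h, hσpos]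
  have hqσ : ∀ i, σ i ≤ q i := by
    intro i; by_cases h : (i : ℕ) < p
    · simp [hqdef, h]
    · simp only [hqdef, h, if_false]
      exact hσmono ⟨p, hpN⟩ i (by simpa [Fin.le_def] using Nat.le_of_not_lt h)
  -- the orthogonal matrix with rows u i
  set U : Matrix (Fin N) (Fin N) ℝ := Matrix.of u with hUdef
  have hUUT : U * Uᵀ = 1 := by
    ext i j
    simpa [Matrix.mul_apply, Matrix.one_apply, hUdef, dotProduct] using hortho i j
  have hUTU : Uᵀ * U = 1 := mul_eq_one_comm.mp hUUT
  -- any matrix with eigenpairs (c i, u i) factors as Uᵀ D U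
  have key : ∀ (A : Matrix (Fin N) (Fin N) ℝ) (c : Fin N → ℝ),
      (∀ i, A *ᵥ u i = c i • u i) → A = Uᵀ * Matrix.diagonal c * U := by
    intro A c h
    have h1 : A * Uᵀ = Uᵀ * Matrix.diagonal c := by
      ext i j
      have h2 := congrFun (h j) i
      simp only [Matrix.mulVec, dotProduct, Pi.smul_apply, smul_eq_mul] at h2
      simp only [Matrix.mul_apply, Matrix.transpose_apply, Matrix.diagonal_apply, hUdef,
        Matrix.of_apply, mul_ite, mul_zero]
      rw [Finset.sum_ite_eq' Finset.univ j (fun k => u k i * c k)]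
      simp only [Finset.mem_univ, if_true]
      rw [h2]; ring
    calc A = A * (Uᵀ * U) := by rw [hUTU, Matrix.mul_one]
    _ = (A * Uᵀ) * U := by rw [Matrix.mul_assoc]
    _ = Uᵀ * Matrix.diagonal c * U := by rw [h1]
  have hHr : Pᵀ * H * P = Uᵀ * Matrix.diagonal σ * U := key _ σ hHreig
  have hQfact : Q = Uᵀ * Matrix.diagonal q * U := key _ q hQeig
  -- inverse of Q
  have hdiag : Matrix.diagonal q * Matrix.diagonal (fun i => (q i)⁻¹) = 1 := by
    rw [Matrix.diagonal_mul_diagonal]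
    rw [show (fun i => q i * (q i)⁻¹) = fun _ => (1 : ℝ) from
      funext fun i => mul_inv_cancel₀ (hqpos i).ne', Matrix.diagonal_one]
  have hQR : Q * (Uᵀ * Matrix.diagonal (fun i => (q i)⁻¹) * U) = 1 := by
    rw [hQfact]
    calc Uᵀ * Matrix.diagonal q * U * (Uᵀ * Matrix.diagonal (fun i => (q i)⁻¹) * U)
        = Uᵀ * Matrix.diagonal q * (U * Uᵀ) * Matrix.diagonal (fun i => (q i)⁻¹) * U := by
          simp only [Matrix.mul_assoc]
      _ = 1 := by rw [hUUT, Matrix.mul_one, Matrix.mul_assoc Uᵀ, hdiag, Matrix.mul_one, hUTU]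
  have hQQinv : Q * Q⁻¹ = 1 := by rw [Matrix.inv_eq_right_inv hQR]; exact hQR
  -- abbreviations
  set y : Fin N → ℝ := Pᵀ *ᵥ g with hydef
  set z : Fin N → ℝ := Q⁻¹ *ᵥ y with hzdef
  have hQz : Q *ᵥ z = y := by rw [hzdef, Matrix.mulVec_mulVec, hQQinv, Matrix.one_mulVec]
  -- facts about H and S
  have hHdet : IsUnit H.det := hH.det_pos.ne'.isUnit
  have hHsymm : Hᵀ = H := by
    rw [← Matrix.conjTranspose_eq_transpose_of_trivial]; exact hH.isHermitian.eq
  have hSsymm : Sᵀ = S := by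
    rw [← Matrix.conjTranspose_eq_transpose_of_trivial]; exact hS.isHermitian.eq
  have hHa : H *ᵥ (H⁻¹ *ᵥ g) = g := by
    rw [Matrix.mulVec_mulVec, Matrix.mul_nonsing_inv _ hHdet, Matrix.one_mulVec]
  set a : Fin n → ℝ := H⁻¹ *ᵥ g with hadef
  set b : Fin n → ℝ := P *ᵥ z with hbdef
  -- quadratic form via S
  have hquad : ∀ v : Fin n → ℝ, (S *ᵥ v) ⬝ᵥ (S *ᵥ v) = v ⬝ᵥ (H *ᵥ v) := by
    intro v
    rw [Matrix.dotProduct_mulVec, ← Matrix.mulVec_transpose, hSsymm, Matrix.mulVec_mulVec,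
      hSS, dotProduct_comm]
  -- moving P across dot products
  have hPdot : ∀ (w : Fin N → ℝ) (v : Fin n → ℝ), (P *ᵥ w) ⬝ᵥ v = w ⬝ᵥ (Pᵀ *ᵥ v) := by
    intro w v
    rw [dotProduct_comm, Matrix.dotProduct_mulVec, ← Matrix.mulVec_transpose, dotProduct_comm]
  -- symmetric move for H
  have hHdot : ∀ v w : Fin n → ℝ, v ⬝ᵥ (H *ᵥ w) = (H *ᵥ v) ⬝ᵥ w := by
    intro v w
    rw [Matrix.dotProduct_mulVec, ← Matrix.mulVec_transpose, hHsymm]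
  -- conjugation identity
  have hconj : ∀ c : Fin N → ℝ,
      z ⬝ᵥ ((Uᵀ * Matrix.diagonal c * U) *ᵥ z)
        = (U *ᵥ z) ⬝ᵥ (Matrix.diagonal c *ᵥ (U *ᵥ z)) := by
    intro c
    rw [Matrix.mul_assoc, ← Matrix.mulVec_mulVec, Matrix.dotProduct_mulVec,
      Matrix.vecMul_transpose, ← Matrix.mulVec_mulVec]
  -- diagonal comparison
  have hDle : ∀ w : Fin N → ℝ,
      w ⬝ᵥ (Matrix.diagonal σ *ᵥ w) ≤ w ⬝ᵥ (Matrix.diagonal q *ᵥ w) := by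
    intro w
    simp only [dotProduct, Matrix.mulVec_diagonal]
    apply Finset.sum_le_sum
    intro i _
    nlinarith [sq_nonneg (w i), hqσ i]
  -- key inequality : z ⬝ᵥ (H_r *ᵥ z) ≤ z ⬝ᵥ y
  have hkey : z ⬝ᵥ ((Pᵀ * H * P) *ᵥ z) ≤ z ⬝ᵥ y := by
    rw [← hQz, hHr, hQfact, hconj, hconj]
    exact hDle _
  -- expand b ⬝ H b
  have hbHb : b ⬝ᵥ (H *ᵥ b) = z ⬝ᵥ ((Pᵀ * H * P) *ᵥ z) := by
    rw [hbdef, hPdot, Matrix.mulVec_mulVec, Matrix.mulVec_mulVec, Matrix.mul_assoc]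
  have hbg : b ⬝ᵥ g = z ⬝ᵥ y := by rw [hbdef, hPdot, hydef]
  have hyz : y ⬝ᵥ z = z ⬝ᵥ y := dotProduct_comm _ _
  -- main computation
  have hvec : -(H⁻¹ *ᵥ g) - -(P *ᵥ (Q⁻¹ *ᵥ (Pᵀ *ᵥ g))) = b - a := neg_sub_neg _ _
  have hmain : (S *ᵥ (b - a)) ⬝ᵥ (S *ᵥ (b - a)) ≤ g ⬝ᵥ a - y ⬝ᵥ z := by
    rw [hquad]
    have hexp : (b - a) ⬝ᵥ (H *ᵥ (b - a))
        = b ⬝ᵥ (H *ᵥ b) - g ⬝ᵥ b - (b ⬝ᵥ g - a ⬝ᵥ g) := by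
      rw [Matrix.mulVec_sub, dotProduct_sub, sub_dotProduct, sub_dotProduct,
        hHdot a b, hHa]
    rw [hexp, hyz]
    have hgb : g ⬝ᵥ b = z ⬝ᵥ y := by rw [dotProduct_comm]; exact hbg
    have hag : a ⬝ᵥ g = g ⬝ᵥ a := dotProduct_comm _ _
    rw [hbg, hgb, hag, hbHb]
    linarith [hkey]
  constructor
  · calc (S *ᵥ (-(H⁻¹ *ᵥ g) - -(P *ᵥ (Q⁻¹ *ᵥ (Pᵀ *ᵥ g)))))
        ⬝ᵥ (S *ᵥ (-(H⁻¹ *ᵥ g) - -(P *ᵥ (Q⁻¹ *ᵥ (Pᵀ *ᵥ g)))))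
        = (S *ᵥ (b - a)) ⬝ᵥ (S *ᵥ (b - a)) := by rw [hvec]
    _ ≤ g ⬝ᵥ a - y ⬝ᵥ z := hmain
  · apply Real.sqrt_le_sqrt
    calc (S *ᵥ (-(H⁻¹ *ᵥ g) - -(P *ᵥ (Q⁻¹ *ᵥ (Pᵀ *ᵥ g)))))
        ⬝ᵥ (S *ᵥ (-(H⁻¹ *ᵥ g) - -(P *ᵥ (Q⁻¹ *ᵥ (Pᵀ *ᵥ g)))))
        = (S *ᵥ (b - a)) ⬝ᵥ (S *ᵥ (b - a)) := by rw [hvec]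
    _ ≤ g ⬝ᵥ a - y ⬝ᵥ z := hmain
end

section
/- Let f be a strictly convex standard self-concordant function on ℝⁿ and x a point with ∇f(x) ≠ 0. Let Q be the truncated approximation of A := ∇²f(x) with parameter N, let λ̄ := (∇f(x)ᵀ Q⁻¹ ∇f(x))^{1/2} and d̂ := −Q⁻¹ ∇f(x), and set t* := 1/(1 + λ̄). Then f(x + t* d̂) ≤ f(x) − λ̄²/(2(1 + λ̄)); in particular, for any α ∈ (0, 1/2], the Armijo condition f(x + t* d̂) ≤ f(x) + α t* ∇f(x)ᵀ d̂ holds. -/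
open Matrix

open Set in

private lemma aux_omega_mono {a b : ℝ} (ha : 0 ≤ a) (hab : a ≤ b) (hb1 : b < 1) :
    -a - Real.log (1 - a) ≤ -b - Real.log (1 - b) := by
  have hd : ∀ s ∈ Set.Ioo (0:ℝ) b, HasDerivAt (fun s : ℝ => -s - Real.log (1 - s))
      (-1 - (-(1:ℝ))/(1 - s)) s := by
    intro s hs
    have h1 : (1:ℝ) - s ≠ 0 := by nlinarith [hs.1, hs.2]
    have hlin : HasDerivAt (fun s : ℝ => (1:ℝ) - s) (-1) s := by
      simpa using (hasDerivAt_id s).const_sub 1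
    exact (hasDerivAt_neg s).sub (hlin.log h1)
  have key : MonotoneOn (fun s : ℝ => -s - Real.log (1 - s)) (Set.Icc 0 b) := by
    apply monotoneOn_of_deriv_nonneg (convex_Icc 0 b)
    · apply ContinuousOn.sub continuousOn_neg
      apply ContinuousOn.log ((continuous_const.sub continuous_id).continuousOn)
      intro s hs
      simp only [Pi.sub_apply, id_eq]
      intro hc
      nlinarith [hs.1, hs.2]
    · intro s hs
      rw [interior_Icc] at hs
      exact ((hd s hs).differentiableAt).differentiableWithinAt
    · intro s hs
      rw [interior_Icc] at hs
      rw [(hd s hs).deriv]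
      have h1 : (0:ℝ) < 1 - s := by nlinarith [hs.2]
      have : -1 - (-(1:ℝ))/(1 - s) = s / (1 - s) := by field_simp; ring
      rw [this]
      exact div_nonneg hs.1.le h1.le
  by_cases hab' : a = b
  · simp [hab']
  · exact key ⟨ha, hab⟩ ⟨ha.trans hab, le_rfl⟩ hab

private lemma aux_log_le {lam : ℝ} (h : 0 ≤ lam) :
    Real.log (1 + lam) ≤ lam - lam ^ 2 / (2 * (1 + lam)) := by
  have hd : ∀ y ∈ Set.Ioo (0:ℝ) lam,
      HasDerivAt (fun y : ℝ => y - Real.log (1 + y) - y ^ 2 / (2 * (1 + y)))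
        (1 - 1/(1 + y) - ((2 * y ^ 1) * (2 * (1 + y)) - y ^ 2 * (2 * 1)) / (2 * (1 + y)) ^ 2) y := by
    intro y hy
    have h1 : (1:ℝ) + y ≠ 0 := by nlinarith [hy.1]
    have h2 : (2:ℝ) * (1 + y) ≠ 0 := by nlinarith [hy.1]
    have hlin : HasDerivAt (fun y : ℝ => (1:ℝ) + y) 1 y := by
      simpa using (hasDerivAt_id y).const_add 1
    have hlog : HasDerivAt (fun y : ℝ => Real.log (1 + y)) (1/(1 + y)) y := hlin.log h1
    have hpow : HasDerivAt (fun y : ℝ => y ^ 2) ((2:ℕ) * y ^ 1) y := by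
      simpa using hasDerivAt_pow 2 y
    have hden : HasDerivAt (fun y : ℝ => 2 * (1 + y)) (2 * 1) y := hlin.const_mul 2
    have hdiv := hpow.div hden h2
    have hid : HasDerivAt (fun y : ℝ => y) 1 y := hasDerivAt_id y
    exact ((hid.sub hlog).sub hdiv).congr_deriv (by push_cast; ring)
  have key : MonotoneOn (fun y : ℝ => y - Real.log (1 + y) - y ^ 2 / (2 * (1 + y)))
      (Set.Icc 0 lam) := by
    apply monotoneOn_of_deriv_nonneg (convex_Icc 0 lam)
    · apply ContinuousOn.sub
      · apply ContinuousOn.sub continuousOn_id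
        apply ContinuousOn.log ((continuous_const.add continuous_id).continuousOn)
        intro s hs; simp only [Pi.add_apply, id_eq]; intro hc; nlinarith [hs.1]
      · apply ContinuousOn.div (continuous_pow 2).continuousOn
          ((continuous_const.mul (continuous_const.add continuous_id)).continuousOn)
        intro s hs; simp only [Pi.mul_apply, Pi.add_apply, id_eq]; intro hc; nlinarith [hs.1]
    · intro s hs
      rw [interior_Icc] at hs
      exact ((hd s hs).differentiableAt).differentiableWithinAt
    · intro s hs
      rw [interior_Icc] at hs
      rw [(hd s hs).deriv]
      have h1 : (0:ℝ) < 1 + s := by nlinarith [hs.1]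
      have : 1 - 1/(1 + s) - ((2 * s ^ 1) * (2 * (1 + s)) - s ^ 2 * (2 * 1)) / (2 * (1 + s)) ^ 2
          = s ^ 2 / (2 * (1 + s) ^ 2) := by field_simp; ring
      rw [this]
      positivity
  rcases eq_or_lt_of_le h with h0 | h0
  · simp [← h0]
  · have := key ⟨le_rfl, h⟩ ⟨h, le_rfl⟩ h
    norm_num at this
    linarith [this]

open Set in
private lemma sc_core (φ : ℝ → ℝ) (lam b : ℝ) (hb : 0 < b) (hbl : b ≤ lam)
    (hφ : ContDiff ℝ 3 φ)
    (hd1 : deriv φ 0 = -lam ^ 2)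
    (hb2 : b ^ 2 = iteratedDeriv 2 φ 0)
    (hpos : ∀ t, 0 < iteratedDeriv 2 φ t)
    (hsc : ∀ t, |iteratedDeriv 3 φ t| ≤ 2 * iteratedDeriv 2 φ t ^ ((3 : ℝ) / 2)) :
    φ (1 / (1 + lam)) ≤ φ 0 - lam + Real.log (1 + lam) := by
  have hlam : 0 < lam := hb.trans_le hbl
  set T : ℝ := 1 / (1 + lam) with hT
  have h1lam : (0:ℝ) < 1 + lam := by linarith
  have hTpos : 0 < T := by positivity
  have hlamT : lam * T < 1 := by
    rw [hT, mul_one_div, div_lt_one h1lam]; linarith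
  have hbtle : ∀ t ∈ Icc (0:ℝ) T, b * t ≤ lam * T := by
    intro t ht
    exact mul_le_mul hbl ht.2 ht.1 hlam.le
  have h1bt : ∀ t ∈ Icc (0:ℝ) T, 0 < 1 - b * t := by
    intro t ht
    have := hbtle t ht
    linarith
  -- differentiability bookkeeping
  have h3 : (3 : WithTop ℕ∞) = 2 + 1 := by norm_num
  have h2 : (2 : WithTop ℕ∞) = 1 + 1 := by norm_num
  rw [h3, contDiff_succ_iff_deriv] at hφ
  obtain ⟨hφdiff, -, hφ'⟩ := hφ
  rw [h2, contDiff_succ_iff_deriv] at hφ'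
  obtain ⟨hφ'diff, -, hψC⟩ := hφ'
  set ψ : ℝ → ℝ := deriv (deriv φ) with hψdef
  have hψdiff : Differentiable ℝ ψ := hψC.differentiable one_ne_zero
  have hψeq : iteratedDeriv 2 φ = ψ := by
    rw [iteratedDeriv_succ, iteratedDeriv_one]
  have hψ'eq : iteratedDeriv 3 φ = deriv ψ := by
    rw [iteratedDeriv_succ, hψeq]
  rw [hψeq] at hb2 hpos
  rw [hψ'eq] at hsc
  simp only [hψeq] at hsc
  have hψpos : ∀ t, 0 < ψ t := hpos
  have hsq : ∀ t, 0 < Real.sqrt (ψ t) := fun t => Real.sqrt_pos.mpr (hψpos t)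
  -- rewrite rpow
  have hsc' : ∀ t, |deriv ψ t| ≤ 2 * (ψ t * Real.sqrt (ψ t)) := by
    intro t
    have h := hsc t
    rwa [show ((3:ℝ)/2) = 1 + 1/2 by norm_num, Real.rpow_add (hψpos t), Real.rpow_one,
      ← Real.sqrt_eq_rpow] at h
  -- χ and its derivative
  set χ : ℝ → ℝ := fun t => (Real.sqrt (ψ t))⁻¹ with hχdef
  set χ' : ℝ → ℝ := fun t => -(deriv ψ t / (2 * Real.sqrt (ψ t))) / Real.sqrt (ψ t) ^ 2 with hχ'def
  have hχHD : ∀ t, HasDerivAt χ (χ' t) t := by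
    intro t
    exact (((hψdiff t).hasDerivAt).sqrt (hψpos t).ne').inv (hsq t).ne'
  have hχbound : ∀ t, ‖χ' t‖ ≤ 1 := by
    intro t
    have h := hsc' t
    have s1 := hsq t
    have hsq2 : Real.sqrt (ψ t) ^ 2 = ψ t := Real.sq_sqrt (hψpos t).le
    rw [Real.norm_eq_abs, hχ'def]
    have heq : |-(deriv ψ t / (2 * Real.sqrt (ψ t))) / Real.sqrt (ψ t) ^ 2|
        = |deriv ψ t| / (2 * (ψ t * Real.sqrt (ψ t))) := by
      rw [abs_div, abs_neg, abs_div, abs_of_pos (by nlinarith [hsq t] : (0:ℝ) < 2 * Real.sqrt (ψ t)),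
        abs_of_pos (by nlinarith [hsq t] : (0:ℝ) < Real.sqrt (ψ t) ^ 2), div_div, hsq2]
      ring_nf
    rw [heq, div_le_one (by nlinarith [hsq t, hψpos t])]
    exact h
  -- Lipschitz bound on χ
  have key := norm_image_sub_le_of_norm_deriv_le_segment'
    (f := χ) (f' := χ') (a := 0) (b := T) (C := 1)
    (fun t _ => (hχHD t).hasDerivWithinAt) (fun t _ => hχbound t)
  have hχ0 : χ 0 = b⁻¹ := by
    rw [hχdef]
    simp only [← hb2, Real.sqrt_sq hb.le]
  have hTb : T < b⁻¹ := by
    rw [inv_eq_one_div, lt_div_iff₀ hb]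
    calc T * b = b * T := by ring
    _ ≤ lam * T := hbtle T ⟨hTpos.le, le_rfl⟩
    _ < 1 := hlamT
  -- upper bound on ψ
  have hψub : ∀ t ∈ Icc (0:ℝ) T, ψ t ≤ b ^ 2 / (1 - b * t) ^ 2 := by
    intro t ht
    have hk := key t ht
    rw [Real.norm_eq_abs, one_mul, sub_zero] at hk
    have hklb : b⁻¹ - t ≤ χ t := by
      have := (abs_le.mp hk).1
      rw [hχ0] at this
      linarith
    have h1 : 0 < b⁻¹ - t := by
      have := ht.2
      linarith [hTb]
    have h3' : Real.sqrt (ψ t) ≤ (b⁻¹ - t)⁻¹ := by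
      have := inv_anti₀ h1 hklb
      rwa [hχdef, inv_inv] at this
    have h5 : 0 < 1 - b * t := h1bt t ht
    have h4 : (b⁻¹ - t)⁻¹ = b / (1 - b * t) := by
      have hbt' : b⁻¹ - t = (1 - b * t) / b := by field_simp
      rw [hbt', inv_div]
    calc ψ t = Real.sqrt (ψ t) ^ 2 := (Real.sq_sqrt (hψpos t).le).symm
    _ ≤ (b / (1 - b * t)) ^ 2 := by
        apply pow_le_pow_left₀ (Real.sqrt_nonneg _)
        rw [← h4]; exact h3'
    _ = b ^ 2 / (1 - b * t) ^ 2 := div_pow b _ 2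
  -- Step B : bound deriv φ
  have hGder : ∀ t, 1 - b * t ≠ 0 →
      HasDerivAt (fun t : ℝ => deriv φ t - b * (1 - b * t)⁻¹)
        (ψ t - b * (-(-(b * 1)) / (1 - b * t) ^ 2)) t := by
    intro t hne
    have hlin : HasDerivAt (fun t : ℝ => 1 - b * t) (-(b * 1)) t :=
      ((hasDerivAt_id t).const_mul b).const_sub 1
    exact ((hφ'diff t).hasDerivAt).sub ((hlin.inv hne).const_mul b)
  have hG : AntitoneOn (fun t : ℝ => deriv φ t - b * (1 - b * t)⁻¹) (Icc 0 T) := by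
    apply antitoneOn_of_deriv_nonpos (convex_Icc 0 T)
    · apply ContinuousOn.sub (hφ'diff.continuous.continuousOn)
      apply ContinuousOn.mul continuousOn_const
      apply ContinuousOn.inv₀ ((continuous_const.sub (continuous_const.mul continuous_id)).continuousOn)
      intro t ht
      exact (h1bt t ht).ne'
    · intro t ht
      rw [interior_Icc] at ht
      exact ((hGder t (h1bt t ⟨ht.1.le, ht.2.le⟩).ne').differentiableAt).differentiableWithinAt
    · intro t ht
      rw [interior_Icc] at ht
      have htI : t ∈ Icc (0:ℝ) T := ⟨ht.1.le, ht.2.le⟩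
      have h5 := h1bt t htI
      rw [(hGder t h5.ne').deriv]
      have := hψub t htI
      have hbb : b * (-(-(b * 1)) / (1 - b * t) ^ 2) = b ^ 2 / (1 - b * t) ^ 2 := by
        field_simp
      rw [hbb]
      linarith
  have hGbound : ∀ t ∈ Icc (0:ℝ) T, deriv φ t ≤ -lam ^ 2 - b + b * (1 - b * t)⁻¹ := by
    intro t ht
    have := hG (left_mem_Icc.mpr hTpos.le) ht ht.1
    simp only [mul_zero, sub_zero, inv_one, mul_one, hd1] at this
    linarith
  -- Step C : bound φ
  have hFder : ∀ t, 1 - b * t ≠ 0 →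
      HasDerivAt (fun t : ℝ => φ t + (lam ^ 2 + b) * t + Real.log (1 - b * t))
        (deriv φ t + (lam ^ 2 + b) * 1 + (-(b * 1)) / (1 - b * t)) t := by
    intro t hne
    have hlin : HasDerivAt (fun t : ℝ => 1 - b * t) (-(b * 1)) t :=
      ((hasDerivAt_id t).const_mul b).const_sub 1
    exact (((hφdiff t).hasDerivAt).add ((hasDerivAt_id t).const_mul (lam ^ 2 + b))).add
      (hlin.log hne)
  have hF : AntitoneOn (fun t : ℝ => φ t + (lam ^ 2 + b) * t + Real.log (1 - b * t)) (Icc 0 T) := by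
    apply antitoneOn_of_deriv_nonpos (convex_Icc 0 T)
    · apply ContinuousOn.add
      · exact (hφdiff.continuous.continuousOn).add (continuous_const.mul continuous_id).continuousOn
      · apply ContinuousOn.log ((continuous_const.sub (continuous_const.mul continuous_id)).continuousOn)
        intro t ht
        exact (h1bt t ht).ne'
    · intro t ht
      rw [interior_Icc] at ht
      exact ((hFder t (h1bt t ⟨ht.1.le, ht.2.le⟩).ne').differentiableAt).differentiableWithinAt
    · intro t ht
      rw [interior_Icc] at ht
      have htI : t ∈ Icc (0:ℝ) T := ⟨ht.1.le, ht.2.le⟩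
      have h5 := h1bt t htI
      rw [(hFder t h5.ne').deriv]
      have hGb := hGbound t htI
      have : (-(b * 1)) / (1 - b * t) = -(b * (1 - b * t)⁻¹) := by
        field_simp
      rw [this]
      linarith
  have hfinal := hF (left_mem_Icc.mpr hTpos.le) (right_mem_Icc.mpr hTpos.le) hTpos.le
  simp only [mul_zero, add_zero, sub_zero, Real.log_one] at hfinal
  -- hfinal : φ T + (lam^2+b)*T + log (1 - b*T) ≤ φ 0
  have hω := aux_omega_mono (a := b * T) (b := lam * T)
    (by positivity) (hbtle T (right_mem_Icc.mpr hTpos.le)) hlamT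
  have h1mlamT : 1 - lam * T = (1 + lam)⁻¹ := by
    rw [hT]; field_simp; ring
  have hloginv : Real.log (1 - lam * T) = -Real.log (1 + lam) := by
    rw [h1mlamT, Real.log_inv]
  have hlamsum : lam ^ 2 * T + lam * T = lam := by
    rw [hT]; field_simp; ring
  rw [hloginv] at hω
  linarith [hfinal, hω, hlamsum]

/-- Let `f` be a strictly convex standard self-concordant
function on `ℝⁿ` and `x` a point with `∇f(x) ≠ 0`.  Let `Q` be the truncated
approximation of `A := ∇²f(x)` with parameter `N`,
`λ̄ := (∇f(x)ᵀ Q⁻¹ ∇f(x))^{1/2}`, `d̂ := −Q⁻¹ ∇f(x)`, `t* := 1/(1 + λ̄)`.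
Then `f(x + t* d̂) ≤ f(x) − λ̄²/(2(1 + λ̄))`; in particular for any
`α ∈ (0, 1/2]` the Armijo condition `f(x + t* d̂) ≤ f(x) + α t* ∇f(x)ᵀ d̂`
holds. -/
theorem stmt9 {n N : ℕ} (hN : 1 ≤ N) (hNn : N < n)
    (f : (Fin n → ℝ) → ℝ) (grad : (Fin n → ℝ) → Fin n → ℝ)
    (hess : (Fin n → ℝ) → Matrix (Fin n) (Fin n) ℝ)
    (hf : ContDiff ℝ 3 f)
    (hconv : StrictConvexOn ℝ Set.univ f)
    (hgrad : ∀ x u : Fin n → ℝ, deriv (fun t : ℝ => f (x + t • u)) 0 = grad x ⬝ᵥ u)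
    (hhessq : ∀ x u : Fin n → ℝ,
      iteratedDeriv 2 (fun t : ℝ => f (x + t • u)) 0 = u ⬝ᵥ (hess x *ᵥ u))
    (hhsymm : ∀ x, (hess x).IsSymm)
    (hhpd : ∀ x, (hess x).PosDef)
    (hsc : ∀ x u : Fin n → ℝ, ∀ t : ℝ,
      |iteratedDeriv 3 (fun s : ℝ => f (x + s • u)) t|
        ≤ 2 * iteratedDeriv 2 (fun s : ℝ => f (x + s • u)) t ^ ((3 : ℝ) / 2))
    (hclosed : ∀ c : ℝ, IsClosed {x | f x ≤ c})
    (hbdd : BddBelow (Set.range f))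
    (x : Fin n → ℝ) (hgx : grad x ≠ 0)
    (σ : Fin n → ℝ) (u : Fin n → Fin n → ℝ)
    (hσpos : ∀ i, 0 < σ i)
    (hσmono : ∀ i j : Fin n, i ≤ j → σ j ≤ σ i)
    (hortho : ∀ i j : Fin n, u i ⬝ᵥ u j = if i = j then (1 : ℝ) else 0)
    (heig : ∀ i, hess x *ᵥ u i = σ i • u i)
    (Q : Matrix (Fin n) (Fin n) ℝ) (hQsymm : Q.IsSymm)
    (hQeig : ∀ i : Fin n, Q *ᵥ u i = (if (i : ℕ) < N then σ i else σ ⟨N, hNn⟩) • u i)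
    (lambar : ℝ) (hlambar : lambar = Real.sqrt (grad x ⬝ᵥ (Q⁻¹ *ᵥ grad x))) :
    f (x + (1 / (1 + lambar)) • -(Q⁻¹ *ᵥ grad x)) ≤ f x - lambar ^ 2 / (2 * (1 + lambar)) ∧
    ∀ α : ℝ, 0 < α → α ≤ 1 / 2 →
      f (x + (1 / (1 + lambar)) • -(Q⁻¹ *ᵥ grad x))
        ≤ f x + α * (1 / (1 + lambar)) * (grad x ⬝ᵥ -(Q⁻¹ *ᵥ grad x)) := by
  classical
  set g : Fin n → ℝ := grad x with hgdef
  -- eigenvector matrix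
  set P : Matrix (Fin n) (Fin n) ℝ := Matrix.of u with hPdef
  have hPPT : P * Pᵀ = 1 := by
    ext i j
    simpa [hPdef, Matrix.mul_apply, Matrix.one_apply, dotProduct] using hortho i j
  have hPTP : Pᵀ * P = 1 := mul_eq_one_comm.mp hPPT
  set μ : Fin n → ℝ := fun i => if (i : ℕ) < N then σ i else σ ⟨N, hNn⟩ with hμdef
  have hμpos : ∀ i, 0 < μ i := by
    intro i; rw [hμdef]; dsimp only; split <;> exact hσpos _
  have hμge : ∀ i, σ i ≤ μ i := by
    intro i
    rw [hμdef]; dsimp only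
    split
    · exact le_rfl
    · rename_i hi
      exact hσmono ⟨N, hNn⟩ i (Fin.le_iff_val_le_val.mpr (Nat.le_of_not_lt hi))
  -- decomposition of Q and hess x
  have hdecomp : ∀ (M : Matrix (Fin n) (Fin n) ℝ) (ν : Fin n → ℝ),
      (∀ i, M *ᵥ u i = ν i • u i) → M = Pᵀ * Matrix.diagonal ν * P := by
    intro M ν hMe
    have hMP : M * Pᵀ = Pᵀ * Matrix.diagonal ν := by
      ext j i
      have := congrFun (hMe i) j
      simp only [Matrix.mulVec, dotProduct, Pi.smul_apply, smul_eq_mul] at this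
      simp only [Matrix.mul_apply, Matrix.transpose_apply, Matrix.diagonal_apply, hPdef,
        Matrix.of_apply, mul_ite, mul_zero]
      rw [Finset.sum_ite_eq' Finset.univ i (fun k => u k j * ν k)]
      simp only [Finset.mem_univ, if_true]
      rw [this, mul_comm]
    calc M = M * (Pᵀ * P) := by rw [hPTP, Matrix.mul_one]
    _ = (M * Pᵀ) * P := by rw [Matrix.mul_assoc]
    _ = Pᵀ * Matrix.diagonal ν * P := by rw [hMP]
  have hQdec : Q = Pᵀ * Matrix.diagonal μ * P := hdecomp Q μ hQeig
  have hAdec : hess x = Pᵀ * Matrix.diagonal σ * P := hdecomp (hess x) σ heig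
  -- Q is positive definite
  have hPz : ∀ z : Fin n → ℝ, z ≠ 0 → P *ᵥ z ≠ 0 := by
    intro z hz hPz0
    apply hz
    have : Pᵀ *ᵥ (P *ᵥ z) = z := by
      rw [Matrix.mulVec_mulVec, hPTP, Matrix.one_mulVec]
    rw [hPz0, Matrix.mulVec_zero] at this
    exact this.symm
  have hquad : ∀ (ν : Fin n → ℝ) (z : Fin n → ℝ),
      z ⬝ᵥ ((Pᵀ * Matrix.diagonal ν * P) *ᵥ z) = ∑ i, ν i * (P *ᵥ z) i ^ 2 := by
    intro ν z
    rw [Matrix.mul_assoc, ← Matrix.mulVec_mulVec, Matrix.dotProduct_mulVec,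
      Matrix.vecMul_transpose, ← Matrix.mulVec_mulVec]
    simp only [dotProduct, Matrix.mulVec_diagonal]
    apply Finset.sum_congr rfl
    intro i _
    ring
  have hQpd : Q.PosDef := by
    refine Matrix.posDef_iff_dotProduct_mulVec.mpr ⟨?_, ?_⟩
    · rw [Matrix.IsHermitian, Matrix.conjTranspose_eq_transpose_of_trivial]
      exact hQsymm
    · intro z hz
      rw [star_trivial, hQdec, hquad]
      obtain ⟨j, hj⟩ := Function.ne_iff.mp (hPz z hz)
      apply Finset.sum_pos'
      · intro i _
        have := hμpos i
        positivity
      · refine ⟨j, Finset.mem_univ j, ?_⟩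
        rw [pow_two]
        exact mul_pos (hμpos j) (mul_self_pos.mpr hj)
  have hQdet : IsUnit Q.det := hQpd.det_pos.ne'.isUnit
  have hQipd : Q⁻¹.PosDef := hQpd.inv
  set y : Fin n → ℝ := Q⁻¹ *ᵥ g with hydef
  set lam2 : ℝ := g ⬝ᵥ y with hlam2def
  have hlam2pos : 0 < lam2 := by
    have := hQipd.dotProduct_mulVec_pos hgx
    rwa [star_trivial] at this
  have hlampos : 0 < lambar := by
    rw [hlambar]
    exact Real.sqrt_pos.mpr hlam2pos
  have hlamsq : lambar ^ 2 = lam2 := by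
    rw [hlambar, Real.sq_sqrt hlam2pos.le]
  have hQy : Q *ᵥ y = g := by
    rw [hydef, Matrix.mulVec_mulVec, Matrix.mul_nonsing_inv Q hQdet, Matrix.one_mulVec]
  have hy0 : y ≠ 0 := by
    intro h
    apply hgx
    have := hQy
    rw [h, Matrix.mulVec_zero] at this
    exact this.symm
  set d : Fin n → ℝ := -(Q⁻¹ *ᵥ grad x) with hddef
  have hdy : d = -y := rfl
  have hd0 : d ≠ 0 := by
    rw [hdy, neg_ne_zero]; exact hy0
  -- quadratic form comparison : y ⬝ᵥ (hess x *ᵥ y) ≤ lam2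
  have hcomp : y ⬝ᵥ (hess x *ᵥ y) ≤ lam2 := by
    have h1 : y ⬝ᵥ (hess x *ᵥ y) = ∑ i, σ i * (P *ᵥ y) i ^ 2 := by
      rw [hAdec, hquad]
    have h2 : y ⬝ᵥ (Q *ᵥ y) = ∑ i, μ i * (P *ᵥ y) i ^ 2 := by
      rw [hQdec, hquad]
    have h3 : y ⬝ᵥ (Q *ᵥ y) = lam2 := by
      rw [hQy, hlam2def, dotProduct_comm]
    rw [h1, ← h3, h2]
    apply Finset.sum_le_sum
    intro i _
    have := hμge i
    nlinarith [sq_nonneg ((P *ᵥ y) i)]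
  -- the one-dimensional function
  set φ : ℝ → ℝ := fun t : ℝ => f (x + t • d) with hφdef
  have hφC3 : ContDiff ℝ 3 φ := by
    apply hf.comp
    exact contDiff_const.add (contDiff_id.smul contDiff_const)
  have hφd1 : deriv φ 0 = -lambar ^ 2 := by
    rw [hφdef, hgrad x d, hdy, dotProduct_neg, hlamsq, ← hlam2def]
  have hψval : ∀ t : ℝ, iteratedDeriv 2 φ t = d ⬝ᵥ (hess (x + t • d) *ᵥ d) := by
    intro t
    have hshift : φ = fun s : ℝ => f ((x + t • d) + (s + -t) • d) := by
      funext s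
      rw [hφdef]
      congr 1
      rw [add_smul, neg_smul]
      abel
    rw [hshift]
    have := iteratedDeriv_comp_add_const 2 (fun z : ℝ => f ((x + t • d) + z • d)) (-t)
    rw [congrFun this t]
    simp only [add_neg_cancel]
    exact hhessq (x + t • d) d
  have hψpos : ∀ t : ℝ, 0 < iteratedDeriv 2 φ t := by
    intro t
    rw [hψval t]
    have := (hhpd (x + t • d)).dotProduct_mulVec_pos hd0
    rwa [star_trivial] at this
  set b : ℝ := Real.sqrt (iteratedDeriv 2 φ 0) with hbdef
  have hbpos : 0 < b := Real.sqrt_pos.mpr (hψpos 0)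
  have hb2 : b ^ 2 = iteratedDeriv 2 φ 0 := Real.sq_sqrt (hψpos 0).le
  have hble : b ≤ lambar := by
    rw [hbdef, hlambar]
    apply Real.sqrt_le_sqrt
    rw [hψval 0]
    have h0 : x + (0:ℝ) • d = x := by simp
    rw [h0]
    have : d ⬝ᵥ (hess x *ᵥ d) = y ⬝ᵥ (hess x *ᵥ y) := by
      rw [hdy, Matrix.mulVec_neg, dotProduct_neg, neg_dotProduct, neg_neg]
    rw [this]
    exact hcomp
  have hsc' : ∀ t : ℝ, |iteratedDeriv 3 φ t| ≤ 2 * iteratedDeriv 2 φ t ^ ((3 : ℝ) / 2) :=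
    fun t => hsc x d t
  have hmain := sc_core φ lambar b hbpos hble hφC3 hφd1 hb2 hψpos hsc'
  have hφ0 : φ 0 = f x := by rw [hφdef]; simp
  have hlog := aux_log_le hlampos.le
  have hkey : f (x + (1 / (1 + lambar)) • d) ≤ f x - lambar ^ 2 / (2 * (1 + lambar)) := by
    have : φ (1 / (1 + lambar)) = f (x + (1 / (1 + lambar)) • d) := rfl
    rw [← this]
    calc φ (1 / (1 + lambar)) ≤ φ 0 - lambar + Real.log (1 + lambar) := hmain
    _ ≤ f x - lambar ^ 2 / (2 * (1 + lambar)) := by rw [hφ0]; linarith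
  refine ⟨hkey, ?_⟩
  intro α hα1 hα2
  have hgd : grad x ⬝ᵥ -(Q⁻¹ *ᵥ grad x) = -lam2 := by
    rw [dotProduct_neg, ← hydef, ← hgdef, ← hlam2def]
  rw [hgd]
  have h1lam : (0:ℝ) < 1 + lambar := by linarith
  calc f (x + (1 / (1 + lambar)) • d) ≤ f x - lambar ^ 2 / (2 * (1 + lambar)) := hkey
  _ ≤ f x + α * (1 / (1 + lambar)) * -lam2 := by
      rw [← hlamsq]
      have e : lambar ^ 2 / (2 * (1 + lambar)) - α * (1 / (1 + lambar)) * lambar ^ 2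
          = lambar ^ 2 * (1 - 2 * α) / (2 * (1 + lambar)) := by
        field_simp
      have hnn : 0 ≤ lambar ^ 2 * (1 - 2 * α) / (2 * (1 + lambar)) := by
        apply div_nonneg _ (by linarith)
        have : 0 ≤ 1 - 2 * α := by linarith
        positivity
      linarith [e, hnn]
end

section
/- Let f be a strictly convex standard self-concordant function on ℝⁿ and x a point with ∇f(x) ≠ 0. Let Q be the truncated approximation of A := ∇²f(x) with parameter N, let λ̄ := (∇f(x)ᵀ Q⁻¹ ∇f(x))^{1/2} and d̂ := −Q⁻¹ ∇f(x). If α ∈ (0, 1/2) and λ̄ ≤ (1 − 2α)/2, then the unit step satisfies the Armijo condition: f(x + d̂) ≤ f(x) − α λ̄². -/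
open Matrix

/-- Self-concordance integration bound: if `φ` is C³ with positive second
derivative, `φ''(0) = λ²` with `0 < λ < 1/2`, and the self-concordance
inequality holds, then `φ(1) ≤ φ(0) + φ'(0) + λ²/(2(1-λ))`. -/
theorem sc_aux (φ : ℝ → ℝ) (hφ : ContDiff ℝ 3 φ)
    (lam : ℝ) (hlam0 : 0 < lam) (hlam1 : lam < 1/2)
    (hψpos : ∀ t, 0 < iteratedDeriv 2 φ t)
    (hψ0 : iteratedDeriv 2 φ 0 = lam ^ 2)
    (hsc3 : ∀ t, |iteratedDeriv 3 φ t| ≤ 2 * iteratedDeriv 2 φ t ^ ((3 : ℝ) / 2)) :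
    φ 1 ≤ φ 0 + deriv φ 0 + lam ^ 2 / (2 * (1 - lam)) := by
  set ψ : ℝ → ℝ := iteratedDeriv 2 φ with hψdef
  have hψd : Differentiable ℝ ψ := hφ.differentiable_iteratedDeriv 2 (by norm_num)
  have hψderiv : deriv ψ = iteratedDeriv 3 φ := (iteratedDeriv_succ (n := 2)).symm
  have hφ1 : Differentiable ℝ φ := hφ.differentiable (by norm_num)
  have hdφ : Differentiable ℝ (deriv φ) := by
    have h := hφ.differentiable_iteratedDeriv 1 (by norm_num)
    rwa [iteratedDeriv_one] at h
  have hderiv2 : deriv (deriv φ) = ψ := by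
    rw [hψdef, iteratedDeriv_succ, iteratedDeriv_one]
  have hsqne : ∀ t, Real.sqrt (ψ t) ≠ 0 := fun t => (Real.sqrt_pos.mpr (hψpos t)).ne'
  -- derivative of t ↦ (√ψ t)⁻¹ + t
  have hr : ∀ t : ℝ, HasDerivAt (fun s => (Real.sqrt (ψ s))⁻¹ + s)
      (-(1 / (2 * Real.sqrt (ψ t)) * deriv ψ t) / (Real.sqrt (ψ t)) ^ 2 + 1) t := by
    intro t
    have h1 : HasDerivAt ψ (deriv ψ t) t := (hψd t).hasDerivAt
    have h2 : HasDerivAt (fun s => Real.sqrt (ψ s)) (1 / (2 * Real.sqrt (ψ t)) * deriv ψ t) t :=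
      (Real.hasDerivAt_sqrt (hψpos t).ne').comp t h1
    exact (h2.inv (hsqne t)).add (hasDerivAt_id t)
  have hmono : Monotone (fun s => (Real.sqrt (ψ s))⁻¹ + s) := by
    apply monotone_of_deriv_nonneg (fun t => (hr t).differentiableAt)
    intro t
    rw [(hr t).deriv]
    have hs : 0 < Real.sqrt (ψ t) := Real.sqrt_pos.mpr (hψpos t)
    have h3 : deriv ψ t ≤ 2 * Real.sqrt (ψ t) ^ 3 := by
      have habs' := hsc3 t
      rw [← hψderiv] at habs'
      have habs := (abs_le.mp habs').2
      have hpow : (ψ t) ^ ((3 : ℝ) / 2) = Real.sqrt (ψ t) ^ 3 := by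
        rw [Real.sqrt_eq_rpow, ← Real.rpow_natCast ((ψ t) ^ ((1 : ℝ) / 2)) 3,
          ← Real.rpow_mul (hψpos t).le]
        norm_num
      rw [hpow] at habs
      exact habs
    have e1 : -(1 / (2 * Real.sqrt (ψ t)) * deriv ψ t) / (Real.sqrt (ψ t)) ^ 2 + 1
        = (2 * Real.sqrt (ψ t) ^ 3 - deriv ψ t) / (2 * Real.sqrt (ψ t) ^ 3) := by
      field_simp
      ring
    rw [e1]
    apply div_nonneg (by linarith) (by positivity)
  have hψ0' : Real.sqrt (ψ 0) = lam := by rw [hψ0]; exact Real.sqrt_sq hlam0.le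
  have key2 : ∀ t ∈ Set.Icc (0 : ℝ) 1, ψ t ≤ lam ^ 2 * ((1 - lam * t)⁻¹) ^ 2 := by
    intro t ht
    have hden : 0 < 1 - lam * t := by nlinarith [ht.1, ht.2]
    have h0 := hmono ht.1
    dsimp only at h0
    rw [hψ0'] at h0
    have hrt : (1 - lam * t) / lam ≤ (Real.sqrt (ψ t))⁻¹ := by
      have : (1 - lam * t) / lam = lam⁻¹ - t := by field_simp
      rw [this]; linarith
    have h4 : 0 < (1 - lam * t) / lam := div_pos hden hlam0
    have h5 : Real.sqrt (ψ t) ≤ lam / (1 - lam * t) := by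
      calc Real.sqrt (ψ t) = ((Real.sqrt (ψ t))⁻¹)⁻¹ := (inv_inv _).symm
        _ ≤ ((1 - lam * t) / lam)⁻¹ := by
            apply inv_anti₀ h4 hrt
        _ = lam / (1 - lam * t) := by rw [inv_div]
    have h6 : ψ t = Real.sqrt (ψ t) ^ 2 := (Real.sq_sqrt (hψpos t).le).symm
    have h7 : lam / (1 - lam * t) = lam * (1 - lam * t)⁻¹ := by rw [div_eq_mul_inv]
    rw [h6]
    calc Real.sqrt (ψ t) ^ 2 ≤ (lam / (1 - lam * t)) ^ 2 := by
          apply pow_le_pow_left₀ (Real.sqrt_nonneg _) h5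
      _ = lam ^ 2 * ((1 - lam * t)⁻¹) ^ 2 := by rw [h7, mul_pow]
  -- Step B
  have hdφt : ∀ t : ℝ, HasDerivAt (deriv φ) (ψ t) t := by
    intro t
    have h := (hdφ t).hasDerivAt
    rwa [hderiv2] at h
  set W : ℝ → ℝ := fun t => deriv φ 0 + (lam * (1 - lam * t)⁻¹ - lam) - deriv φ t with hWdef
  have hWd : ∀ t ∈ Set.Icc (0 : ℝ) 1,
      HasDerivAt W (lam ^ 2 * ((1 - lam * t)⁻¹) ^ 2 - ψ t) t := by
    intro t ht
    have hden : (1 - lam * t) ≠ 0 := by nlinarith [ht.1, ht.2]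
    have h1 : HasDerivAt (fun s : ℝ => 1 - lam * s) (-lam) t := by
      simpa using ((hasDerivAt_id t).const_mul lam).const_sub 1
    have h2 : HasDerivAt (fun s : ℝ => (1 - lam * s)⁻¹) (lam / (1 - lam * t) ^ 2) t := by
      have := h1.inv hden
      exact this.congr_deriv (by ring)
    have h3 : HasDerivAt (fun s : ℝ => lam * (1 - lam * s)⁻¹ - lam)
        (lam * (lam / (1 - lam * t) ^ 2)) t := (h2.const_mul lam).sub_const lam
    have h4 : HasDerivAt (fun s : ℝ => deriv φ 0 + (lam * (1 - lam * s)⁻¹ - lam))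
        (lam * (lam / (1 - lam * t) ^ 2)) t := h3.const_add (deriv φ 0)
    have h5 := h4.sub (hdφt t)
    have : lam * (lam / (1 - lam * t) ^ 2) - ψ t
        = lam ^ 2 * ((1 - lam * t)⁻¹) ^ 2 - ψ t := by
      field_simp
    rwa [this] at h5
  have hWmono : MonotoneOn W (Set.Icc (0 : ℝ) 1) := by
    apply monotoneOn_of_deriv_nonneg (convex_Icc 0 1)
    · intro t ht
      exact (hWd t ht).continuousAt.continuousWithinAt
    · intro t ht
      rw [interior_Icc] at ht
      exact ((hWd t (Set.Ioo_subset_Icc_self ht)).differentiableAt).differentiableWithinAt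
    · intro t ht
      rw [interior_Icc] at ht
      rw [(hWd t (Set.Ioo_subset_Icc_self ht)).deriv]
      have := key2 t (Set.Ioo_subset_Icc_self ht)
      linarith
  have hW0 : W 0 = 0 := by simp [hWdef]
  have stepB : ∀ t ∈ Set.Icc (0 : ℝ) 1,
      deriv φ t ≤ deriv φ 0 + lam ^ 2 / (1 - lam) * t := by
    intro t ht
    have h0 : W 0 ≤ W t := hWmono (Set.left_mem_Icc.mpr one_pos.le) ht ht.1
    rw [hW0] at h0
    have hden : 0 < 1 - lam * t := by nlinarith [ht.1, ht.2]
    have hden1 : 0 < 1 - lam := by linarith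
    have hb : lam * (1 - lam * t)⁻¹ - lam ≤ lam ^ 2 / (1 - lam) * t := by
      have e2 : lam * (1 - lam * t)⁻¹ - lam = lam ^ 2 * t / (1 - lam * t) := by
        field_simp
        ring
      rw [e2]
      have h8 : lam ^ 2 * t / (1 - lam * t) ≤ lam ^ 2 * t / (1 - lam) := by
        apply div_le_div_of_nonneg_left (by nlinarith [ht.1]) hden1
        nlinarith [ht.2]
      calc lam ^ 2 * t / (1 - lam * t) ≤ lam ^ 2 * t / (1 - lam) := h8
        _ = lam ^ 2 / (1 - lam) * t := by ring
    simp only [hWdef] at h0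
    linarith
  -- Step C
  set G : ℝ → ℝ := fun t => φ 0 + deriv φ 0 * t + lam ^ 2 / (1 - lam) * (t ^ 2 / 2) - φ t
    with hGdef
  have hGd : ∀ t : ℝ, HasDerivAt G (deriv φ 0 + lam ^ 2 / (1 - lam) * t - deriv φ t) t := by
    intro t
    have h1 : HasDerivAt (fun s : ℝ => φ 0 + deriv φ 0 * s + lam ^ 2 / (1 - lam) * (s ^ 2 / 2))
        (deriv φ 0 + lam ^ 2 / (1 - lam) * t) t := by
      have ha : HasDerivAt (fun s : ℝ => deriv φ 0 * s) (deriv φ 0) t := by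
        simpa using (hasDerivAt_id t).const_mul (deriv φ 0)
      have hb : HasDerivAt (fun s : ℝ => s ^ 2 / 2) t t := by
        have := (hasDerivAt_pow 2 t).div_const 2
        simpa using this
      have hc := (ha.const_add (φ 0)).add ((hb.const_mul (lam ^ 2 / (1 - lam))))
      exact hc
    exact h1.sub ((hφ1 t).hasDerivAt)
  have hGmono : MonotoneOn G (Set.Icc (0 : ℝ) 1) := by
    apply monotoneOn_of_deriv_nonneg (convex_Icc 0 1)
    · exact fun t _ => (hGd t).continuousAt.continuousWithinAt
    · exact fun t _ => (hGd t).differentiableAt.differentiableWithinAt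
    · intro t ht
      rw [interior_Icc] at ht
      rw [(hGd t).deriv]
      have := stepB t (Set.Ioo_subset_Icc_self ht)
      linarith
  have hG0 : G 0 = 0 := by simp [hGdef]
  have hG1 : (0 : ℝ) ≤ G 1 := by
    rw [← hG0]
    exact hGmono (Set.left_mem_Icc.mpr one_pos.le) (Set.right_mem_Icc.mpr one_pos.le) zero_le_one
  simp only [hGdef] at hG1
  have : lam ^ 2 / (1 - lam) * (1 ^ 2 / 2) = lam ^ 2 / (2 * (1 - lam)) := by
    rw [one_pow]
    field_simp
  rw [this] at hG1
  linarith

/-- Arithmetic helper for the Armijo bound. -/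
theorem armijo_arith (lam lambar α : ℝ) (hα0 : 0 < α) (hα1 : α < 1 / 2)
    (hlam_pos : 0 < lam) (hlam_le : lam ≤ lambar)
    (hl : lambar ≤ (1 - 2 * α) / 2) :
    lam ^ 2 / (2 * (1 - lam)) ≤ (1 - α) * lambar ^ 2 := by
  have h1m : 0 < 1 - lam := by nlinarith
  have hsq : lam ^ 2 ≤ lambar ^ 2 := by nlinarith
  have h9 : 0 ≤ 2 * (1 - α) * (1 - lam) - 1 := by
    have hb1 : (0 : ℝ) ≤ 1 - α := by linarith
    have hb2 : (0 : ℝ) ≤ (1 - 2 * α) / 2 - lam := by linarith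
    nlinarith [mul_nonneg hb1 hb2, mul_nonneg hα0.le (by linarith : (0 : ℝ) ≤ 1 - 2 * α)]
  rw [div_le_iff₀ (by linarith : (0 : ℝ) < 2 * (1 - lam))]
  nlinarith [mul_nonneg (sq_nonneg lambar) h9, hsq]

/-- Let `f` be strictly convex standard self-concordant, `x`
with `∇f(x) ≠ 0`, `Q` the truncated approximation of `∇²f(x)` with parameter
`N`, `λ̄ = (∇f(x)ᵀ Q⁻¹ ∇f(x))^{1/2}`, `d̂ = −Q⁻¹ ∇f(x)`.  If `α ∈ (0, 1/2)`
and `λ̄ ≤ (1 − 2α)/2`, then the unit step satisfies the Armijo condition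
`f(x + d̂) ≤ f(x) − α λ̄²`. -/
theorem stmt10 {n N : ℕ} (hN : 1 ≤ N) (hNn : N < n)
    (f : (Fin n → ℝ) → ℝ) (grad : (Fin n → ℝ) → Fin n → ℝ)
    (hess : (Fin n → ℝ) → Matrix (Fin n) (Fin n) ℝ)
    (hf : ContDiff ℝ 3 f)
    (hconv : StrictConvexOn ℝ Set.univ f)
    (hgrad : ∀ x u : Fin n → ℝ, deriv (fun t : ℝ => f (x + t • u)) 0 = grad x ⬝ᵥ u)
    (hhessq : ∀ x u : Fin n → ℝ,
      iteratedDeriv 2 (fun t : ℝ => f (x + t • u)) 0 = u ⬝ᵥ (hess x *ᵥ u))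
    (hhsymm : ∀ x, (hess x).IsSymm)
    (hhpd : ∀ x, (hess x).PosDef)
    (hsc : ∀ x u : Fin n → ℝ, ∀ t : ℝ,
      |iteratedDeriv 3 (fun s : ℝ => f (x + s • u)) t|
        ≤ 2 * iteratedDeriv 2 (fun s : ℝ => f (x + s • u)) t ^ ((3 : ℝ) / 2))
    (hclosed : ∀ c : ℝ, IsClosed {x | f x ≤ c})
    (hbdd : BddBelow (Set.range f))
    (x : Fin n → ℝ) (hgx : grad x ≠ 0)
    (σ : Fin n → ℝ) (u : Fin n → Fin n → ℝ)
    (hσpos : ∀ i, 0 < σ i)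
    (hσmono : ∀ i j : Fin n, i ≤ j → σ j ≤ σ i)
    (hortho : ∀ i j : Fin n, u i ⬝ᵥ u j = if i = j then (1 : ℝ) else 0)
    (heig : ∀ i, hess x *ᵥ u i = σ i • u i)
    (Q : Matrix (Fin n) (Fin n) ℝ) (hQsymm : Q.IsSymm)
    (hQeig : ∀ i : Fin n, Q *ᵥ u i = (if (i : ℕ) < N then σ i else σ ⟨N, hNn⟩) • u i)
    (lambar : ℝ) (hlambar : lambar = Real.sqrt (grad x ⬝ᵥ (Q⁻¹ *ᵥ grad x)))
    (α : ℝ) (hα0 : 0 < α) (hα1 : α < 1 / 2)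
    (hl : lambar ≤ (1 - 2 * α) / 2) :
    f (x + -(Q⁻¹ *ᵥ grad x)) ≤ f x - α * lambar ^ 2 := by
  have hg' : grad x = grad x := rfl
  set g : Fin n → ℝ := grad x with hgdef
  set A : Matrix (Fin n) (Fin n) ℝ := hess x with hAdef
  set μ : Fin n → ℝ := fun i => if (i : ℕ) < N then σ i else σ ⟨N, hNn⟩ with hμ
  have hμpos : ∀ i, 0 < μ i := by
    intro i; rw [hμ]; dsimp only; split <;> exact hσpos _
  have hσμ : ∀ i, σ i ≤ μ i := by
    intro i; rw [hμ]; dsimp only; split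
    · exact le_refl _
    · exact hσmono ⟨N, hNn⟩ i (by rw [Fin.le_def]; exact le_of_not_gt (by assumption))
  set U : Matrix (Fin n) (Fin n) ℝ := Matrix.of u with hU
  have hUUT : U * Uᵀ = 1 := by
    ext i j
    simpa [hU, Matrix.mul_apply, Matrix.one_apply, dotProduct] using hortho i j
  have hUTU : Uᵀ * U = 1 := mul_eq_one_comm.mp hUUT
  have hQUt : Q * Uᵀ = Uᵀ * Matrix.diagonal μ := by
    ext i j
    have h1 : (Q * Uᵀ) i j = (Q *ᵥ u j) i := by
      simp [hU, Matrix.mul_apply, Matrix.mulVec, dotProduct]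
    rw [h1, hQeig j, Matrix.mul_diagonal]
    simp [hU, hμ, mul_comm]
  have hAUt : A * Uᵀ = Uᵀ * Matrix.diagonal σ := by
    ext i j
    have h1 : (A * Uᵀ) i j = (A *ᵥ u j) i := by
      simp [hU, Matrix.mul_apply, Matrix.mulVec, dotProduct]
    rw [h1, heig j, Matrix.mul_diagonal]
    simp [hU, mul_comm]
  have hQinv : Q⁻¹ = Uᵀ * Matrix.diagonal (fun i => (μ i)⁻¹) * U := by
    apply Matrix.inv_eq_right_inv
    calc Q * (Uᵀ * Matrix.diagonal (fun i => (μ i)⁻¹) * U)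
        = ((Q * Uᵀ) * Matrix.diagonal (fun i => (μ i)⁻¹)) * U := by
          simp only [Matrix.mul_assoc]
      _ = (Uᵀ * (Matrix.diagonal μ * Matrix.diagonal (fun i => (μ i)⁻¹))) * U := by
          rw [hQUt]; simp only [Matrix.mul_assoc]
      _ = 1 := by
          rw [Matrix.diagonal_mul_diagonal]
          have : (fun i => μ i * (μ i)⁻¹) = fun _ => (1 : ℝ) := by
            funext i; exact mul_inv_cancel₀ (hμpos i).ne'
          rw [this, Matrix.diagonal_one, Matrix.mul_one, hUTU]
  set c : Fin n → ℝ := U *ᵥ g with hc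
  have hgc : g = Uᵀ *ᵥ c := by
    rw [hc, Matrix.mulVec_mulVec, hUTU, Matrix.one_mulVec]
  have hdot : ∀ a b : Fin n → ℝ, (Uᵀ *ᵥ a) ⬝ᵥ (Uᵀ *ᵥ b) = a ⬝ᵥ b := by
    intro a b
    rw [Matrix.dotProduct_mulVec, Matrix.vecMul_transpose, Matrix.mulVec_mulVec, hUUT,
      Matrix.one_mulVec]
  set e : Fin n → ℝ := fun i => (μ i)⁻¹ * c i with he
  have hQig : Q⁻¹ *ᵥ g = Uᵀ *ᵥ e := by
    rw [hQinv, ← Matrix.mulVec_mulVec, ← Matrix.mulVec_mulVec, ← hc]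
    have hde : Matrix.diagonal (fun i => (μ i)⁻¹) *ᵥ c = e := by
      funext i; rw [Matrix.mulVec_diagonal]
    rw [hde]
  have hAe : A *ᵥ (Uᵀ *ᵥ e) = Uᵀ *ᵥ (fun i => σ i * e i) := by
    rw [Matrix.mulVec_mulVec, hAUt, ← Matrix.mulVec_mulVec]
    have hde : Matrix.diagonal σ *ᵥ e = fun i => σ i * e i := by
      funext i; rw [Matrix.mulVec_diagonal]
    rw [hde]
  have hgQg : g ⬝ᵥ (Q⁻¹ *ᵥ g) = ∑ i, (μ i)⁻¹ * c i ^ 2 := by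
    rw [hQig, hgc, hdot]
    simp only [dotProduct, he]
    exact Finset.sum_congr rfl fun i _ => by ring
  -- c is nonzero
  have hc0 : c ≠ 0 := by
    intro h
    exact hgx (by rw [hgc, h, Matrix.mulVec_zero])
  obtain ⟨i0, hi0⟩ : ∃ i, c i ≠ 0 := Function.ne_iff.mp hc0
  have hS_pos : 0 < ∑ i, (μ i)⁻¹ * c i ^ 2 := by
    apply Finset.sum_pos'
    · intro i _; exact mul_nonneg (inv_nonneg.mpr (hμpos i).le) (sq_nonneg _)
    · exact ⟨i0, Finset.mem_univ _,
        mul_pos (inv_pos.mpr (hμpos i0)) (sq_pos_of_ne_zero hi0)⟩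
  set d : Fin n → ℝ := -(Q⁻¹ *ᵥ g) with hd
  have hdUe : d = -(Uᵀ *ᵥ e) := by rw [hd, hQig]
  have hgd : g ⬝ᵥ d = -∑ i, (μ i)⁻¹ * c i ^ 2 := by
    rw [hd, dotProduct_neg, hgQg]
  have hdAd : d ⬝ᵥ (A *ᵥ d) = ∑ i, σ i * e i ^ 2 := by
    rw [hdUe, Matrix.mulVec_neg, dotProduct_neg, neg_dotProduct, neg_neg, hAe, hdot]
    simp only [dotProduct]
    exact Finset.sum_congr rfl fun i _ => by ring
  have hdAd_pos : 0 < d ⬝ᵥ (A *ᵥ d) := by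
    rw [hdAd]
    apply Finset.sum_pos'
    · intro i _; exact mul_nonneg (hσpos i).le (sq_nonneg _)
    · refine ⟨i0, Finset.mem_univ _, ?_⟩
      have h1 := hσpos i0
      have h2 : e i0 ≠ 0 := by
        rw [he]; dsimp only
        exact mul_ne_zero (inv_ne_zero (hμpos i0).ne') hi0
      exact mul_pos h1 (sq_pos_of_ne_zero h2)
  have hdAd_le : d ⬝ᵥ (A *ᵥ d) ≤ ∑ i, (μ i)⁻¹ * c i ^ 2 := by
    rw [hdAd]
    apply Finset.sum_le_sum
    intro i _
    have h1 := hμpos i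
    have h2 := hσμ i
    have he2 : μ i * e i ^ 2 = (μ i)⁻¹ * c i ^ 2 := by
      rw [he]; dsimp only; field_simp
    calc σ i * e i ^ 2 ≤ μ i * e i ^ 2 := by nlinarith [sq_nonneg (e i)]
      _ = (μ i)⁻¹ * c i ^ 2 := he2
  have hd0 : d ≠ 0 := by
    intro h
    rw [h] at hdAd_pos
    simp at hdAd_pos
  -- the quantities
  have hlambar_sq : lambar ^ 2 = ∑ i, (μ i)⁻¹ * c i ^ 2 := by
    rw [hlambar, Real.sq_sqrt (by rw [hgQg]; exact hS_pos.le), hgQg]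
  have hlambar_pos : 0 < lambar := by
    rw [hlambar]
    apply Real.sqrt_pos.mpr
    rw [hgQg]; exact hS_pos
  set lam : ℝ := Real.sqrt (d ⬝ᵥ (A *ᵥ d)) with hlamdef
  have hlam_pos : 0 < lam := Real.sqrt_pos.mpr hdAd_pos
  have hlam_sq : lam ^ 2 = d ⬝ᵥ (A *ᵥ d) := Real.sq_sqrt hdAd_pos.le
  have hlam_le : lam ≤ lambar := by
    rw [hlamdef, hlambar, hgQg]
    exact Real.sqrt_le_sqrt hdAd_le
  have hlam_half : lam < 1 / 2 := by
    have : lambar ≤ (1 - 2 * α) / 2 := hl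
    nlinarith
  -- the function φ
  set φ : ℝ → ℝ := fun t : ℝ => f (x + t • d) with hφdef
  have hφc : ContDiff ℝ 3 φ := by
    apply hf.comp
    exact contDiff_const.add (contDiff_id.smul contDiff_const)
  have hψpos : ∀ t, 0 < iteratedDeriv 2 φ t := by
    intro t
    have hshift : (fun s : ℝ => f ((x + t • d) + s • d)) = fun s : ℝ => φ (t + s) := by
      funext s
      rw [hφdef]
      dsimp only
      congr 1
      rw [add_smul]
      abel
    have h1 : iteratedDeriv 2 (fun s : ℝ => f ((x + t • d) + s • d)) 0
        = iteratedDeriv 2 φ t := by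
      rw [hshift, iteratedDeriv_comp_const_add]
      simp
    have h2 := hhessq (x + t • d) d
    rw [h1] at h2
    rw [h2]
    have h3 := (hhpd (x + t • d)).dotProduct_mulVec_pos hd0
    simpa using h3
  have hψ0 : iteratedDeriv 2 φ 0 = lam ^ 2 := by
    rw [hlam_sq]
    exact hhessq x d
  have hmain := sc_aux φ hφc lam hlam_pos hlam_half hψpos hψ0 (hsc x d)
  have hφ1eq : φ 1 = f (x + d) := by rw [hφdef]; dsimp only; rw [one_smul]
  have hφ0eq : φ 0 = f x := by rw [hφdef]; dsimp only; rw [zero_smul, add_zero]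
  have hgd' : deriv φ 0 = -lambar ^ 2 := by
    have h1 : deriv φ 0 = g ⬝ᵥ d := hgrad x d
    rw [h1, hgd, hlambar_sq]
  rw [hφ1eq, hφ0eq, hgd'] at hmain
  -- key inequality
  have hkey : lam ^ 2 / (2 * (1 - lam)) ≤ (1 - α) * lambar ^ 2 :=
    armijo_arith lam lambar α hα0 hα1 hlam_pos hlam_le hl
  linarith
end

section
/- Let f be a strictly convex standard self-concordant function on ℝⁿ, x a point, H := ∇²f(x), P an n×N matrix of full column rank, H_r := Pᵀ H P, and Q the coarse truncated approximation of H_r with parameter p. Let λ̂ := (∇f(x)ᵀ P Q⁻¹ Pᵀ ∇f(x))^{1/2} and d̂ := −P Q⁻¹ Pᵀ ∇f(x). If t > 0 satisfies t λ̂ < 1 and x⁺ := x + t d̂, then (i) ∇²f(x⁺) ⪯ (1 − t λ̂)⁻² ∇²f(x), and (ii) [∇²f(x⁺)]⁻¹ ⪯ (1 − t λ̂)⁻² [∇²f(x)]⁻¹ (in the Loewner order on symmetric matrices). -/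
open Matrix

private lemma node_id (a b g d c s R : ℝ) (hcs : c^2 + s^2 = 1) (hR : R^2 = 3) :
    ((4*c^2-1)^2/9) * (a*c^3 + 3*b*c^2*s + 3*g*c*s^2 + d*s^3)
    + (4/9*(s^2*(R*c+s)^2)) * (a*(-c/2 - R*s/2)^3 + 3*b*((-c/2 - R*s/2)^2*(-s/2 + R*c/2))
        + 3*g*((-c/2 - R*s/2)*(-s/2 + R*c/2)^2) + d*(-s/2 + R*c/2)^3)
    + (4/9*(s^2*(R*c-s)^2)) * (a*(-c/2 + R*s/2)^3 + 3*b*((-c/2 + R*s/2)^2*(-s/2 - R*c/2))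
        + 3*g*((-c/2 + R*s/2)*(-s/2 - R*c/2)^2) + d*(-s/2 - R*c/2)^3)
    = a*(4*c^3-3*c) + b*(3*s-4*s^3) := by
  linear_combination
    (3*s*b - (1/9)*s^3*d - s^3*b - (1/9)*s^5*d - s^5*b - 3*c*a - (1/3)*c*s^2*g - 3*c*s^2*a
      - (1/3)*c*s^4*g - 3*c*s^4*a + (8/3)*c^2*s*b + (7/9)*c^2*s^3*d + (5/3)*c^2*s^3*b
      + (8/9)*c^3*a + (7/3)*c^3*s^2*g - (19/9)*c^3*s^2*a + (16/3)*c^4*s*b + (16/9)*c^5*a) * hcs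
    + (-(1/3)*s^7*b - c*s^6*a - (2/9)*c*s^6*R^2*a + (2/9)*c^2*s^5*d + (1/3)*c^2*s^5*b
      + (1/3)*c^2*s^5*R^2*b + (2/3)*c^3*s^4*g - (5/3)*c^3*s^4*a - (1/3)*c^3*s^4*R^2*a
      - (1/3)*c^4*s^3*d + (7/3)*c^4*s^3*b - (1/9)*c^4*s^3*R^2*d + (2/3)*c^4*s^3*R^2*b
      - c^5*s^2*g - (1/9)*c^5*s^2*a - (1/3)*c^5*s^2*R^2*g) * hR

private lemma exists_cos_sin (α β : ℝ) (h : α^2 + β^2 = 1) :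
    ∃ θ : ℝ, Real.cos θ = α ∧ Real.sin θ = β := by
  have hα1 : -1 ≤ α := by nlinarith
  have hα2 : α ≤ 1 := by nlinarith
  rcases le_or_gt 0 β with hβ | hβ
  · refine ⟨Real.arccos α, Real.cos_arccos hα1 hα2, ?_⟩
    rw [Real.sin_arccos]
    rw [show (1:ℝ) - α^2 = β^2 by linarith]
    rw [Real.sqrt_sq hβ]
  · refine ⟨-Real.arccos α, by rw [Real.cos_neg]; exact Real.cos_arccos hα1 hα2, ?_⟩
    rw [Real.sin_neg, Real.sin_arccos]
    rw [show (1:ℝ) - α^2 = β^2 by linarith]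
    rw [Real.sqrt_sq_eq_abs, abs_of_neg hβ]; ring

private lemma mixed2D (a b g d : ℝ)
    (hdiag : ∀ c s : ℝ, c^2 + s^2 = 1 → |a*c^3 + 3*b*(c^2*s) + 3*g*(c*s^2) + d*s^3| ≤ 2)
    (α β : ℝ) (hαβ : α^2 + β^2 = 1) : |a*α + b*β| ≤ 2 := by
  obtain ⟨θ, hc, hs⟩ := exists_cos_sin α β hαβ
  set c := Real.cos (θ/3) with hcdef
  set s := Real.sin (θ/3) with hsdef
  have hcs : c^2 + s^2 = 1 := by
    rw [hcdef, hsdef]; rw [add_comm]; exact Real.sin_sq_add_cos_sq _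
  set R := Real.sqrt 3 with hRdef
  have hR : R^2 = 3 := Real.sq_sqrt (by norm_num)
  have hα : α = 4*c^3 - 3*c := by
    rw [← hc, show θ = 3*(θ/3) by ring, Real.cos_three_mul]
  have hβ : β = 3*s - 4*s^3 := by
    rw [← hs, show θ = 3*(θ/3) by ring, Real.sin_three_mul]
  -- the three nodes
  have hn0 := hdiag c s hcs
  have hn1 := hdiag (-c/2 - R*s/2) (-s/2 + R*c/2) (by nlinarith)
  have hn2 := hdiag (-c/2 + R*s/2) (-s/2 - R*c/2) (by nlinarith)
  have hl0 : (0:ℝ) ≤ (4*c^2-1)^2/9 := by positivity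
  have hl1 : (0:ℝ) ≤ 4/9*(s^2*(R*c+s)^2) := by positivity
  have hl2 : (0:ℝ) ≤ 4/9*(s^2*(R*c-s)^2) := by positivity
  have hsum : (4*c^2-1)^2/9 + 4/9*(s^2*(R*c+s)^2) + 4/9*(s^2*(R*c-s)^2) = 1 := by
    linear_combination (8/9 + 8/9*s^2 + 16/9*c^2) * hcs + (8/9*c^2*s^2) * hR
  have key := node_id a b g d c s R hcs hR
  rw [hα, hβ]
  calc |a*(4*c^3-3*c) + b*(3*s-4*s^3)| = |((4*c^2-1)^2/9) * (a*c^3 + 3*b*(c^2*s) + 3*g*(c*s^2) + d*s^3)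
      + (4/9*(s^2*(R*c+s)^2)) * (a*(-c/2 - R*s/2)^3 + 3*b*((-c/2 - R*s/2)^2*(-s/2 + R*c/2))
          + 3*g*((-c/2 - R*s/2)*(-s/2 + R*c/2)^2) + d*(-s/2 + R*c/2)^3)
      + (4/9*(s^2*(R*c-s)^2)) * (a*(-c/2 + R*s/2)^3 + 3*b*((-c/2 + R*s/2)^2*(-s/2 - R*c/2))
          + 3*g*((-c/2 + R*s/2)*(-s/2 - R*c/2)^2) + d*(-s/2 - R*c/2)^3)| := by
        rw [show a*c^3 + 3*b*(c^2*s) + 3*g*(c*s^2) + d*s^3 = a*c^3 + 3*b*c^2*s + 3*g*c*s^2 + d*s^3 by ring, key]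
    _ ≤ ((4*c^2-1)^2/9) * 2 + (4/9*(s^2*(R*c+s)^2)) * 2 + (4/9*(s^2*(R*c-s)^2)) * 2 := by
        refine (abs_add_three _ _ _).trans ?_
        gcongr <;> rw [abs_mul] <;>
          [skip; skip; skip] <;>
          first
          | exact mul_le_mul (le_of_eq (abs_of_nonneg ‹_›)) ‹_› (abs_nonneg _) ‹_›
    _ = 2 := by linarith

noncomputable def scD1 {E : Type*} [NormedAddCommGroup E] [NormedSpace ℝ E]
    (f : E → ℝ) (w : E) (y : E) : ℝ := fderiv ℝ f y w
noncomputable def scD2 {E : Type*} [NormedAddCommGroup E] [NormedSpace ℝ E]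
    (f : E → ℝ) (w₁ w₂ : E) (y : E) : ℝ := fderiv ℝ (scD1 f w₁) y w₂
noncomputable def scD3 {E : Type*} [NormedAddCommGroup E] [NormedSpace ℝ E]
    (f : E → ℝ) (w₁ w₂ w₃ : E) (y : E) : ℝ := fderiv ℝ (scD2 f w₁ w₂) y w₃

section CalcAux
variable {E : Type*} [NormedAddCommGroup E] [NormedSpace ℝ E] {f : E → ℝ}

lemma contDiff_scD1 (hf : ContDiff ℝ 3 f) (w : E) : ContDiff ℝ 2 (scD1 f w) :=
  (hf.fderiv_right (by norm_num)).clm_apply contDiff_const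

lemma contDiff_scD2 (hf : ContDiff ℝ 3 f) (w₁ w₂ : E) : ContDiff ℝ 1 (scD2 f w₁ w₂) :=
  ((contDiff_scD1 hf w₁).fderiv_right (by norm_num)).clm_apply contDiff_const

lemma differentiable_scD1 (hf : ContDiff ℝ 3 f) (w : E) : Differentiable ℝ (scD1 f w) :=
  (contDiff_scD1 hf w).differentiable (by norm_num)

lemma differentiable_scD2 (hf : ContDiff ℝ 3 f) (w₁ w₂ : E) : Differentiable ℝ (scD2 f w₁ w₂) :=
  (contDiff_scD2 hf w₁ w₂).differentiable (by norm_num)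

lemma hasDerivAt_comp_line {g : E → ℝ} (hg : Differentiable ℝ g) (y w : E) (s : ℝ) :
    HasDerivAt (fun s : ℝ => g (y + s • w)) (fderiv ℝ g (y + s • w) w) s := by
  have hline : HasDerivAt (fun s : ℝ => y + s • w) w s := by
    simpa using ((hasDerivAt_id s).smul_const w).const_add y
  exact ((hg (y + s • w)).hasFDerivAt).comp_hasDerivAt s hline

lemma deriv_line1 (hf : ContDiff ℝ 3 f) (y w : E) :
    deriv (fun s : ℝ => f (y + s • w)) = fun s => scD1 f w (y + s • w) := by
  funext s
  exact (hasDerivAt_comp_line (hf.differentiable (by norm_num)) y w s).deriv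

lemma deriv_line2 (hf : ContDiff ℝ 3 f) (y w : E) :
    deriv (fun s : ℝ => scD1 f w (y + s • w)) = fun s => scD2 f w w (y + s • w) := by
  funext s
  exact (hasDerivAt_comp_line (differentiable_scD1 hf w) y w s).deriv

lemma iteratedDeriv2_line (hf : ContDiff ℝ 3 f) (y w : E) (s : ℝ) :
    iteratedDeriv 2 (fun s : ℝ => f (y + s • w)) s = scD2 f w w (y + s • w) := by
  rw [show (2:ℕ) = 1+1 from rfl, iteratedDeriv_succ, iteratedDeriv_one,
    deriv_line1 hf y w, deriv_line2 hf y w]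

lemma iteratedDeriv3_line (hf : ContDiff ℝ 3 f) (y w : E) (s : ℝ) :
    iteratedDeriv 3 (fun s : ℝ => f (y + s • w)) s = scD3 f w w w (y + s • w) := by
  rw [show (3:ℕ) = 2+1 from rfl, iteratedDeriv_succ]
  have h2 : iteratedDeriv 2 (fun s : ℝ => f (y + s • w)) = fun s => scD2 f w w (y + s • w) := by
    funext s'; exact iteratedDeriv2_line hf y w s'
  rw [h2]
  exact (hasDerivAt_comp_line (differentiable_scD2 hf w w) y w s).deriv

lemma scD2_eq_snd (hf : ContDiff ℝ 3 f) (w₁ w₂ : E) (y : E) :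
    scD2 f w₁ w₂ y = fderiv ℝ (fderiv ℝ f) y w₂ w₁ := by
  have hdf : DifferentiableAt ℝ (fderiv ℝ f) y :=
    ((hf.fderiv_right (by norm_num : (2:WithTop ℕ∞)+1 ≤ 3)).differentiable (by norm_num)) y
  have h := fderiv_clm_apply hdf (differentiableAt_const w₁)
  have : scD2 f w₁ w₂ y = (fderiv ℝ (fun z => fderiv ℝ f z w₁) y) w₂ := rfl
  rw [this, h]; simp

lemma scD2_symm (hf : ContDiff ℝ 3 f) (w₁ w₂ : E) (y : E) :
    scD2 f w₁ w₂ y = scD2 f w₂ w₁ y := by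
  rw [scD2_eq_snd hf, scD2_eq_snd hf]
  exact ((hf.contDiffAt.isSymmSndFDerivAt (by norm_num)) w₂ w₁)

lemma scD3_symm23 (hf : ContDiff ℝ 3 f) (w₁ w₂ w₃ : E) (y : E) :
    scD3 f w₁ w₂ w₃ y = scD3 f w₁ w₃ w₂ y := by
  have hg : ContDiff ℝ 2 (scD1 f w₁) := contDiff_scD1 hf w₁
  have hdg : DifferentiableAt ℝ (fderiv ℝ (scD1 f w₁)) y :=
    ((hg.fderiv_right (by norm_num : (1:WithTop ℕ∞)+1 ≤ 2)).differentiable (by norm_num)) y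
  have key : ∀ a b : E, scD3 f w₁ a b y = fderiv ℝ (fderiv ℝ (scD1 f w₁)) y b a := by
    intro a b
    have h := fderiv_clm_apply hdg (differentiableAt_const a)
    have : scD3 f w₁ a b y = (fderiv ℝ (fun z => fderiv ℝ (scD1 f w₁) z a) y) b := rfl
    rw [this, h]; simp
  rw [key, key]
  exact (hg.contDiffAt.isSymmSndFDerivAt (by norm_num)) w₃ w₂

lemma scD3_symm12 (hf : ContDiff ℝ 3 f) (w₁ w₂ w₃ : E) (y : E) :
    scD3 f w₁ w₂ w₃ y = scD3 f w₂ w₁ w₃ y := by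
  have : scD2 f w₁ w₂ = scD2 f w₂ w₁ := funext fun z => scD2_symm hf w₁ w₂ z
  unfold scD3
  rw [this]
section LinAux
variable {E : Type*} [NormedAddCommGroup E] [NormedSpace ℝ E] {f : E → ℝ}

-- slot 3
lemma scD3_add3 (w₁ w₂ a b : E) (y : E) :
    scD3 f w₁ w₂ (a + b) y = scD3 f w₁ w₂ a y + scD3 f w₁ w₂ b y :=
  map_add (fderiv ℝ (scD2 f w₁ w₂) y) a b

lemma scD3_smul3 (w₁ w₂ a : E) (k : ℝ) (y : E) :
    scD3 f w₁ w₂ (k • a) y = k * scD3 f w₁ w₂ a y :=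
  map_smul (fderiv ℝ (scD2 f w₁ w₂) y) k a

-- slot 2 (function level on scD2 first)
lemma scD2_add2 (w₁ a b : E) : scD2 f w₁ (a + b) = scD2 f w₁ a + scD2 f w₁ b := by
  funext y; exact map_add (fderiv ℝ (scD1 f w₁) y) a b

lemma scD2_smul2 (w₁ a : E) (k : ℝ) : scD2 f w₁ (k • a) = k • scD2 f w₁ a := by
  funext y; exact map_smul (fderiv ℝ (scD1 f w₁) y) k a

lemma scD3_add2 (hf : ContDiff ℝ 3 f) (w₁ a b w₃ : E) (y : E) :
    scD3 f w₁ (a + b) w₃ y = scD3 f w₁ a w₃ y + scD3 f w₁ b w₃ y := by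
  unfold scD3
  rw [scD2_add2, show scD2 f w₁ a + scD2 f w₁ b = fun z => scD2 f w₁ a z + scD2 f w₁ b z from rfl,
    fderiv_fun_add ((differentiable_scD2 hf w₁ a) y) ((differentiable_scD2 hf w₁ b) y)]
  rfl

lemma scD3_smul2 (hf : ContDiff ℝ 3 f) (w₁ a w₃ : E) (k : ℝ) (y : E) :
    scD3 f w₁ (k • a) w₃ y = k * scD3 f w₁ a w₃ y := by
  unfold scD3
  rw [scD2_smul2, show (k • scD2 f w₁ a) = fun z => k • scD2 f w₁ a z from rfl,
    fderiv_fun_const_smul ((differentiable_scD2 hf w₁ a) y) k]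
  rfl

-- slot 1
lemma scD1_add1 (a b : E) : scD1 f (a + b) = scD1 f a + scD1 f b := by
  funext y; exact map_add (fderiv ℝ f y) a b

lemma scD1_smul1 (a : E) (k : ℝ) : scD1 f (k • a) = k • scD1 f a := by
  funext y; exact map_smul (fderiv ℝ f y) k a

lemma scD2_add1 (hf : ContDiff ℝ 3 f) (a b w₂ : E) :
    scD2 f (a + b) w₂ = scD2 f a w₂ + scD2 f b w₂ := by
  funext y
  unfold scD2
  rw [scD1_add1, show scD1 f a + scD1 f b = fun z => scD1 f a z + scD1 f b z from rfl,
    fderiv_fun_add ((differentiable_scD1 hf a) y) ((differentiable_scD1 hf b) y)]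
  rfl

lemma scD2_smul1 (hf : ContDiff ℝ 3 f) (a w₂ : E) (k : ℝ) :
    scD2 f (k • a) w₂ = k • scD2 f a w₂ := by
  funext y
  unfold scD2
  rw [scD1_smul1, show (k • scD1 f a) = fun z => k • scD1 f a z from rfl,
    fderiv_fun_const_smul ((differentiable_scD1 hf a) y) k]
  rfl

lemma scD3_add1 (hf : ContDiff ℝ 3 f) (a b w₂ w₃ : E) (y : E) :
    scD3 f (a + b) w₂ w₃ y = scD3 f a w₂ w₃ y + scD3 f b w₂ w₃ y := by
  unfold scD3
  rw [scD2_add1 hf, show scD2 f a w₂ + scD2 f b w₂ = fun z => scD2 f a w₂ z + scD2 f b w₂ z from rfl,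
    fderiv_fun_add ((differentiable_scD2 hf a w₂) y) ((differentiable_scD2 hf b w₂) y)]
  rfl

lemma scD3_smul1 (hf : ContDiff ℝ 3 f) (a w₂ w₃ : E) (k : ℝ) (y : E) :
    scD3 f (k • a) w₂ w₃ y = k * scD3 f a w₂ w₃ y := by
  unfold scD3
  rw [scD2_smul1 hf, show (k • scD2 f a w₂) = fun z => k • scD2 f a w₂ z from rfl,
    fderiv_fun_const_smul ((differentiable_scD2 hf a w₂) y) k]
  rfl

-- cubic expansion on a two-dim subspace
lemma scD3_expand (hf : ContDiff ℝ 3 f) (e₁ e₂ : E) (c s : ℝ) (y : E) :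
    scD3 f (c • e₁ + s • e₂) (c • e₁ + s • e₂) (c • e₁ + s • e₂) y
      = (scD3 f e₁ e₁ e₁ y) * c^3 + 3 * (scD3 f e₁ e₁ e₂ y) * (c^2*s)
        + 3 * (scD3 f e₁ e₂ e₂ y) * (c*s^2) + (scD3 f e₂ e₂ e₂ y) * s^3 := by
  rw [scD3_add1 hf, scD3_smul1 hf, scD3_smul1 hf]
  rw [scD3_add2 hf, scD3_add2 hf, scD3_smul2 hf, scD3_smul2 hf, scD3_smul2 hf, scD3_smul2 hf]
  rw [scD3_add3, scD3_add3, scD3_add3, scD3_add3,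
    scD3_smul3, scD3_smul3, scD3_smul3, scD3_smul3, scD3_smul3, scD3_smul3, scD3_smul3, scD3_smul3]
  have h1 : scD3 f e₂ e₁ e₁ y = scD3 f e₁ e₁ e₂ y := by
    rw [scD3_symm12 hf, scD3_symm23 hf]
  have h2 : scD3 f e₁ e₂ e₁ y = scD3 f e₁ e₁ e₂ y := by
    rw [scD3_symm23 hf]
  have h3 : scD3 f e₂ e₂ e₁ y = scD3 f e₁ e₂ e₂ y := by
    rw [scD3_symm12 hf, scD3_symm23 hf, scD3_symm12 hf]
  have h4 : scD3 f e₂ e₁ e₂ y = scD3 f e₁ e₂ e₂ y := by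
    rw [scD3_symm12 hf]
  rw [h1, h2, h3, h4]
  ring

end LinAux
open Matrix

lemma rpow_three_halves (z : ℝ) (hz : 0 ≤ z) : z ^ ((3:ℝ)/2) = z * Real.sqrt z := by
  rcases eq_or_lt_of_le hz with h | h
  · rw [← h, Real.zero_rpow (by norm_num), Real.sqrt_zero, mul_zero]
  · rw [show ((3:ℝ)/2) = 1 + 1/2 by norm_num, Real.rpow_add h, Real.rpow_one,
      Real.sqrt_eq_rpow]

section Mixed
variable {n : ℕ} {f : (Fin n → ℝ) → ℝ}

lemma dot_mulVec_symm (M : Matrix (Fin n) (Fin n) ℝ) (hM : M.IsSymm) (a b : Fin n → ℝ) :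
    a ⬝ᵥ M *ᵥ b = b ⬝ᵥ M *ᵥ a := by
  calc a ⬝ᵥ M *ᵥ b = a ᵥ* M ⬝ᵥ b := dotProduct_mulVec _ _ _
    _ = a ᵥ* Mᵀ ⬝ᵥ b := by conv_lhs => rw [← hM]
    _ = M *ᵥ a ⬝ᵥ b := by rw [vecMul_transpose]
    _ = b ⬝ᵥ M *ᵥ a := dotProduct_comm _ _

private lemma qsmul (M : Matrix (Fin n) (Fin n) ℝ) (k l : ℝ) (a b : Fin n → ℝ) :
    (k • a) ⬝ᵥ M *ᵥ (l • b) = k * l * (a ⬝ᵥ M *ᵥ b) := by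
  rw [mulVec_smul, dotProduct_smul, smul_dotProduct]; simp [smul_eq_mul]; ring

lemma mixed_core (hf : ContDiff ℝ 3 f)
    {M : Matrix (Fin n) (Fin n) ℝ} {y : Fin n → ℝ}
    (hdiagy : ∀ w, |scD3 f w w w y| ≤ 2 * (w ⬝ᵥ M *ᵥ w) ^ ((3:ℝ)/2))
    (e₁ e₂ : Fin n → ℝ)
    (he₁1 : e₁ ⬝ᵥ M *ᵥ e₁ = 1) (he₂1 : e₂ ⬝ᵥ M *ᵥ e₂ = 1)
    (he₁₂ : e₁ ⬝ᵥ M *ᵥ e₂ = 0) (he₂₁ : e₂ ⬝ᵥ M *ᵥ e₁ = 0)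
    (γ α δ : ℝ) :
    |scD3 f (γ • e₁) (γ • e₁) (α • e₁ + δ • e₂) y|
      ≤ 2 * ((γ • e₁) ⬝ᵥ M *ᵥ (γ • e₁))
          * Real.sqrt ((α • e₁ + δ • e₂) ⬝ᵥ M *ᵥ (α • e₁ + δ • e₂)) := by
  have hq1 : (γ • e₁) ⬝ᵥ M *ᵥ (γ • e₁) = γ^2 := by rw [qsmul, he₁1]; ring
  have hq2 : (α • e₁ + δ • e₂) ⬝ᵥ M *ᵥ (α • e₁ + δ • e₂) = α^2 + δ^2 := by
    rw [mulVec_add, dotProduct_add, add_dotProduct, add_dotProduct,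
      qsmul, qsmul, qsmul, qsmul, he₁1, he₂1, he₁₂, he₂₁]
    ring
  have hdiag2 : ∀ c s : ℝ, c^2 + s^2 = 1 →
      |(scD3 f e₁ e₁ e₁ y)*c^3 + 3*(scD3 f e₁ e₁ e₂ y)*(c^2*s)
        + 3*(scD3 f e₁ e₂ e₂ y)*(c*s^2) + (scD3 f e₂ e₂ e₂ y)*s^3| ≤ 2 := by
    intro c s hcs
    have hw1 : (c • e₁ + s • e₂) ⬝ᵥ M *ᵥ (c • e₁ + s • e₂) = 1 := by
      rw [mulVec_add, dotProduct_add, add_dotProduct, add_dotProduct,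
        qsmul, qsmul, qsmul, qsmul, he₁1, he₂1, he₁₂, he₂₁]
      linear_combination hcs
    have hb2 := hdiagy (c • e₁ + s • e₂)
    rw [hw1, Real.one_rpow, mul_one] at hb2
    have hexp := scD3_expand hf e₁ e₂ c s y
    calc |(scD3 f e₁ e₁ e₁ y)*c^3 + 3*(scD3 f e₁ e₁ e₂ y)*(c^2*s)
          + 3*(scD3 f e₁ e₂ e₂ y)*(c*s^2) + (scD3 f e₂ e₂ e₂ y)*s^3|
        = |scD3 f (c•e₁+s•e₂) (c•e₁+s•e₂) (c•e₁+s•e₂) y| := by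
          rw [hexp]
      _ ≤ 2 := hb2
  have hD3 : scD3 f (γ•e₁) (γ•e₁) (α•e₁+δ•e₂) y
      = γ^2 * (α * scD3 f e₁ e₁ e₁ y + δ * scD3 f e₁ e₁ e₂ y) := by
    rw [scD3_smul1 hf, scD3_smul2 hf, scD3_add3, scD3_smul3, scD3_smul3]
    ring
  rw [hD3, hq1, hq2, abs_mul, abs_of_nonneg (sq_nonneg γ)]
  by_cases hρ0 : α^2 + δ^2 = 0
  · have hα0 : α = 0 := by nlinarith
    have hδ0 : δ = 0 := by nlinarith
    simp [hα0, hδ0]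
  · have hρpos : 0 < α^2+δ^2 := lt_of_le_of_ne (by positivity) (Ne.symm hρ0)
    have hρ : 0 < Real.sqrt (α^2 + δ^2) := Real.sqrt_pos.2 hρpos
    have hρ2 : (Real.sqrt (α^2 + δ^2))^2 = α^2 + δ^2 := Real.sq_sqrt hρpos.le
    set ρ := Real.sqrt (α^2 + δ^2) with hρdef
    have hunit : (α/ρ)^2 + (δ/ρ)^2 = 1 := by
      rw [div_pow, div_pow, ← add_div, ← hρ2]
      exact div_self (pow_ne_zero 2 hρ.ne')
    have key := mixed2D (scD3 f e₁ e₁ e₁ y) (scD3 f e₁ e₁ e₂ y) (scD3 f e₁ e₂ e₂ y)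
      (scD3 f e₂ e₂ e₂ y) hdiag2 (α/ρ) (δ/ρ) hunit
    have key' : |α * scD3 f e₁ e₁ e₁ y + δ * scD3 f e₁ e₁ e₂ y| ≤ 2 * ρ := by
      have heq : α * scD3 f e₁ e₁ e₁ y + δ * scD3 f e₁ e₁ e₂ y
          = ρ * ((scD3 f e₁ e₁ e₁ y)*(α/ρ) + (scD3 f e₁ e₁ e₂ y)*(δ/ρ)) := by
        field_simp
      rw [heq, abs_mul, abs_of_pos hρ]
      calc ρ * |(scD3 f e₁ e₁ e₁ y)*(α/ρ) + (scD3 f e₁ e₁ e₂ y)*(δ/ρ)| ≤ ρ * 2 :=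
            mul_le_mul_of_nonneg_left key hρ.le
        _ = 2 * ρ := mul_comm _ _
    calc γ^2 * |α * scD3 f e₁ e₁ e₁ y + δ * scD3 f e₁ e₁ e₂ y| ≤ γ^2 * (2*ρ) :=
          mul_le_mul_of_nonneg_left key' (sq_nonneg γ)
      _ = 2 * γ^2 * ρ := by ring

lemma mixed_bound {hess : (Fin n → ℝ) → Matrix (Fin n) (Fin n) ℝ}
    (hf : ContDiff ℝ 3 f)
    (hdiag : ∀ y w, |scD3 f w w w y| ≤ 2 * (w ⬝ᵥ hess y *ᵥ w) ^ ((3:ℝ)/2))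
    (hsymm : ∀ y, (hess y).IsSymm) (hpd : ∀ y, (hess y).PosDef)
    (y u v : Fin n → ℝ) :
    |scD3 f u u v y| ≤ 2 * (u ⬝ᵥ hess y *ᵥ u) * Real.sqrt (v ⬝ᵥ hess y *ᵥ v) := by
  have hq0 : ∀ w, 0 ≤ w ⬝ᵥ hess y *ᵥ w := fun w => by
    have := (hpd y).posSemidef.dotProduct_mulVec_nonneg w; simpa using this
  have hqpos : ∀ w, w ≠ 0 → 0 < w ⬝ᵥ hess y *ᵥ w := fun w hw => by
    have := (hpd y).dotProduct_mulVec_pos hw; simpa using this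
  have hsym : ∀ a b, a ⬝ᵥ hess y *ᵥ b = b ⬝ᵥ hess y *ᵥ a := dot_mulVec_symm _ (hsymm y)
  by_cases hu : u = 0
  · subst hu
    have h0 : (0 : Fin n → ℝ) = (0:ℝ) • (0 : Fin n → ℝ) := by simp
    rw [h0, scD3_smul1 hf, zero_mul, abs_zero]
    exact mul_nonneg (mul_nonneg (by norm_num) (hq0 _)) (Real.sqrt_nonneg _)
  by_cases hv : ∃ k : ℝ, v = k • u
  · obtain ⟨k, rfl⟩ := hv
    rw [scD3_smul3, abs_mul]
    have hb := hdiag y u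
    rw [rpow_three_halves _ (hq0 u)] at hb
    have hqs : (k • u) ⬝ᵥ hess y *ᵥ (k • u) = (u ⬝ᵥ hess y *ᵥ u) * k^2 := by
      rw [qsmul]; ring
    rw [hqs, Real.sqrt_mul (hq0 u), Real.sqrt_sq_eq_abs]
    calc |k| * |scD3 f u u u y|
        ≤ |k| * (2 * ((u ⬝ᵥ hess y *ᵥ u) * Real.sqrt (u ⬝ᵥ hess y *ᵥ u))) :=
          mul_le_mul_of_nonneg_left hb (abs_nonneg k)
      _ = 2 * (u ⬝ᵥ hess y *ᵥ u) * (Real.sqrt (u ⬝ᵥ hess y *ᵥ u) * |k|) := by ring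
  · push_neg at hv
    have huq : 0 < u ⬝ᵥ hess y *ᵥ u := hqpos u hu
    obtain ⟨γ, hγ, hγsq⟩ : ∃ g : ℝ, 0 < g ∧ g^2 = u ⬝ᵥ hess y *ᵥ u :=
      ⟨Real.sqrt _, Real.sqrt_pos.2 huq, Real.sq_sqrt huq.le⟩
    obtain ⟨e₁, he₁def⟩ : ∃ e : Fin n → ℝ, e = γ⁻¹ • u := ⟨_, rfl⟩
    have he₁1 : e₁ ⬝ᵥ hess y *ᵥ e₁ = 1 := by
      rw [he₁def, qsmul, ← hγsq]
      field_simp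
    obtain ⟨α, hαdef⟩ : ∃ α : ℝ, α = e₁ ⬝ᵥ hess y *ᵥ v := ⟨_, rfl⟩
    obtain ⟨w₂, hw₂def⟩ : ∃ w : Fin n → ℝ, w = v - α • e₁ := ⟨_, rfl⟩
    have hw₂0 : w₂ ≠ 0 := by
      intro h
      apply hv (α * γ⁻¹)
      have h' : v = α • e₁ := by
        rw [hw₂def] at h; exact sub_eq_zero.1 h
      rw [h', he₁def, smul_smul]
    have hw₂q : 0 < w₂ ⬝ᵥ hess y *ᵥ w₂ := hqpos w₂ hw₂0
    obtain ⟨δ, hδ, hδsq⟩ : ∃ d : ℝ, 0 < d ∧ d^2 = w₂ ⬝ᵥ hess y *ᵥ w₂ :=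
      ⟨Real.sqrt _, Real.sqrt_pos.2 hw₂q, Real.sq_sqrt hw₂q.le⟩
    obtain ⟨e₂, he₂def⟩ : ∃ e : Fin n → ℝ, e = δ⁻¹ • w₂ := ⟨_, rfl⟩
    have he₂1 : e₂ ⬝ᵥ hess y *ᵥ e₂ = 1 := by
      rw [he₂def, qsmul, ← hδsq]
      field_simp
    have he₁w₂ : e₁ ⬝ᵥ hess y *ᵥ w₂ = 0 := by
      rw [hw₂def, mulVec_sub, dotProduct_sub, mulVec_smul, dotProduct_smul, smul_eq_mul,
        he₁1, mul_one, ← hαdef, sub_self]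
    have he₁₂ : e₁ ⬝ᵥ hess y *ᵥ e₂ = 0 := by
      rw [he₂def, mulVec_smul, dotProduct_smul, smul_eq_mul, he₁w₂, mul_zero]
    have he₂₁ : e₂ ⬝ᵥ hess y *ᵥ e₁ = 0 := by rw [hsym, he₁₂]
    have hu₂ : u = γ • e₁ := by
      rw [he₁def, smul_smul, mul_inv_cancel₀ hγ.ne', one_smul]
    have hv₂ : v = α • e₁ + δ • e₂ := by
      have hde : δ • e₂ = w₂ := by
        rw [he₂def, smul_smul, mul_inv_cancel₀ hδ.ne', one_smul]
      rw [hde, hw₂def]; abel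
    rw [hu₂, hv₂]
    exact mixed_core hf (hdiag y) e₁ e₂ he₁1 he₂1 he₁₂ he₂₁ γ α δ
end Mixed
open Matrix

section Compare
variable {n : ℕ} {f : (Fin n → ℝ) → ℝ} {hess : (Fin n → ℝ) → Matrix (Fin n) (Fin n) ℝ}

lemma hessian_compare
    (hf : ContDiff ℝ 3 f)
    (hd2q : ∀ y w, scD2 f w w y = w ⬝ᵥ hess y *ᵥ w)
    (hdiag : ∀ y w, |scD3 f w w w y| ≤ 2 * (w ⬝ᵥ hess y *ᵥ w) ^ ((3:ℝ)/2))
    (hsymm : ∀ y, (hess y).IsSymm) (hpd : ∀ y, (hess y).PosDef)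
    (x v : Fin n → ℝ) (r : ℝ) (hr1 : r < 1)
    (hrv : Real.sqrt (v ⬝ᵥ hess x *ᵥ v) ≤ r) (u : Fin n → ℝ) :
    (1-r)^2 * (u ⬝ᵥ hess x *ᵥ u) ≤ u ⬝ᵥ hess (x + v) *ᵥ u ∧
      u ⬝ᵥ hess (x + v) *ᵥ u ≤ ((1-r)^2)⁻¹ * (u ⬝ᵥ hess x *ᵥ u) := by
  have hr0 : 0 ≤ r := le_trans (Real.sqrt_nonneg _) hrv
  have hq0 : ∀ y w, 0 ≤ w ⬝ᵥ hess y *ᵥ w := fun y w => by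
    have := (hpd y).posSemidef.dotProduct_mulVec_nonneg w; simpa using this
  by_cases hv0 : v = 0
  · subst hv0
    rw [add_zero]
    have hq := hq0 x u
    have hc1 : (1-r)^2 ≤ 1 := by nlinarith
    have hcpos : 0 < (1-r)^2 := pow_pos (by linarith) 2
    constructor
    · nlinarith
    · have h1 : (1-r)^2 * (u ⬝ᵥ hess x *ᵥ u) ≤ u ⬝ᵥ hess x *ᵥ u := by nlinarith
      calc u ⬝ᵥ hess x *ᵥ u = ((1-r)^2)⁻¹ * ((1-r)^2 * (u ⬝ᵥ hess x *ᵥ u)) := by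
            rw [← mul_assoc, inv_mul_cancel₀ hcpos.ne', one_mul]
        _ ≤ ((1-r)^2)⁻¹ * (u ⬝ᵥ hess x *ᵥ u) :=
            mul_le_mul_of_nonneg_left h1 (by positivity)
  -- nontrivial direction
  set m : ℝ → ℝ := fun s => v ⬝ᵥ hess (x + s • v) *ᵥ v with hmdef
  set h : ℝ → ℝ := fun s => u ⬝ᵥ hess (x + s • v) *ᵥ u with hhdef
  have hm : ∀ s, HasDerivAt m (scD3 f v v v (x + s • v)) s := by
    intro s
    have h1 : m = fun s => scD2 f v v (x + s • v) := by
      funext s'; rw [hmdef]; exact (hd2q (x + s' • v) v).symm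
    rw [h1]
    exact hasDerivAt_comp_line (differentiable_scD2 hf v v) x v s
  have hh : ∀ s, HasDerivAt h (scD3 f u u v (x + s • v)) s := by
    intro s
    have h1 : h = fun s => scD2 f u u (x + s • v) := by
      funext s'; rw [hhdef]; exact (hd2q (x + s' • v) u).symm
    rw [h1]
    exact hasDerivAt_comp_line (differentiable_scD2 hf u u) x v s
  have hmpos : ∀ s, 0 < m s := fun s => by
    have := (hpd (x + s • v)).dotProduct_mulVec_pos hv0; simpa [hmdef] using this
  have hhnn : ∀ s, 0 ≤ h s := fun s => hq0 _ u
  have hm0 : Real.sqrt (m 0) ≤ r := by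
    have : m 0 = v ⬝ᵥ hess x *ᵥ v := by simp [hmdef]
    rw [this]; exact hrv
  have hrpos : 0 < r := lt_of_lt_of_le (Real.sqrt_pos.2 (hmpos 0)) hm0
  have honem : ∀ s ∈ Set.Icc (0:ℝ) 1, 0 < 1 - s * r := by
    intro s hs
    nlinarith [hs.1, hs.2]
  -- Step A : sqrt (m s) ≤ r / (1 - s*r) on [0,1]
  have hstepA : ∀ s ∈ Set.Icc (0:ℝ) 1, Real.sqrt (m s) ≤ r / (1 - s * r) := by
    have hFd : ∀ s : ℝ, HasDerivAt (fun s => (Real.sqrt (m s))⁻¹ + s)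
        (-(scD3 f v v v (x + s • v) / (2 * Real.sqrt (m s))) / (Real.sqrt (m s))^2 + 1) s := by
      intro s
      exact (((hm s).sqrt (hmpos s).ne').inv (Real.sqrt_pos.2 (hmpos s)).ne').add
        (hasDerivAt_id s)
    have hFmono : MonotoneOn (fun s => (Real.sqrt (m s))⁻¹ + s) (Set.Icc (0:ℝ) 1) := by
      apply monotoneOn_of_deriv_nonneg (convex_Icc 0 1)
      · exact (fun s _ => ((hFd s).continuousAt.continuousWithinAt))
      · exact fun s _ => (hFd s).differentiableAt.differentiableWithinAt
      · intro s _
        rw [(hFd s).deriv]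
        have hms := hmpos s
        have hsq : Real.sqrt (m s) > 0 := Real.sqrt_pos.2 hms
        have hsq2 : (Real.sqrt (m s))^2 = m s := Real.sq_sqrt hms.le
        have hb := hdiag (x + s • v) v
        rw [rpow_three_halves _ (hq0 _ v)] at hb
        have hb' : scD3 f v v v (x + s • v) ≤ 2 * (m s * Real.sqrt (m s)) :=
          le_trans (le_abs_self _) (by simpa [hmdef] using hb)
        have hpos : 0 < 2 * Real.sqrt (m s) * (Real.sqrt (m s))^2 :=
          mul_pos (mul_pos two_pos hsq) (pow_pos hsq 2)
        rw [neg_div, div_div]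
        have hdiv : scD3 f v v v (x + s • v) / (2 * Real.sqrt (m s) * (Real.sqrt (m s))^2) ≤ 1 := by
          rw [div_le_one hpos]
          calc scD3 f v v v (x + s • v) ≤ 2 * (m s * Real.sqrt (m s)) := hb'
            _ = 2 * Real.sqrt (m s) * (Real.sqrt (m s))^2 := by rw [hsq2]; ring
        linarith
    intro s hs
    have hkey := hFmono (Set.mem_Icc.2 ⟨le_refl 0, by norm_num⟩) hs hs.1
    -- (√(m 0))⁻¹ + 0 ≤ (√(m s))⁻¹ + s
    have h0inv : r⁻¹ ≤ (Real.sqrt (m 0))⁻¹ := by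
      gcongr
      exact Real.sqrt_pos.2 (hmpos 0)
    have hsum : r⁻¹ - s ≤ (Real.sqrt (m s))⁻¹ := by
      simp only [add_zero] at hkey
      linarith
    have hlb : (1 - s * r) / r ≤ (Real.sqrt (m s))⁻¹ := by
      have heq2 : (1 - s * r)/r = r⁻¹ - s := by field_simp
      rw [heq2]; exact hsum
    have hlbpos : 0 < (1 - s * r) / r := div_pos (honem s hs) hrpos
    calc Real.sqrt (m s) = ((Real.sqrt (m s))⁻¹)⁻¹ := (inv_inv _).symm
      _ ≤ ((1 - s * r) / r)⁻¹ := by gcongr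
      _ = r / (1 - s * r) := by rw [inv_div]
  -- Step B : |h'| bound on [0,1]
  have hstepB : ∀ s ∈ Set.Icc (0:ℝ) 1,
      |scD3 f u u v (x + s • v)| ≤ 2 * h s * (r / (1 - s * r)) := by
    intro s hs
    have hmb := mixed_bound hf hdiag hsymm hpd (x + s • v) u v
    calc |scD3 f u u v (x + s • v)|
        ≤ 2 * (h s) * Real.sqrt (m s) := by simpa [hhdef, hmdef] using hmb
      _ ≤ 2 * h s * (r / (1 - s * r)) := by
          have := hstepA s hs
          have hh' := hhnn s
          nlinarith [Real.sqrt_nonneg (m s)]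
  -- Step C upper : (1-r)^2 * h 1 ≤ h 0
  have hupper : (1 - r)^2 * h 1 ≤ h 0 := by
    have hAd : ∀ s : ℝ, HasDerivAt (fun s => (1 - s * r)^2 * h s)
        (2 * (1 - s * r)^1 * (-r) * h s + (1 - s * r)^2 * scD3 f u u v (x + s • v)) s := by
      intro s
      have h1 : HasDerivAt (fun s : ℝ => 1 - s * r) (-r) s := by
        simpa using ((hasDerivAt_id s).mul_const r).const_sub 1
      exact (h1.pow 2).mul (hh s)
    have hAmono : AntitoneOn (fun s => (1 - s * r)^2 * h s) (Set.Icc (0:ℝ) 1) := by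
      apply antitoneOn_of_deriv_nonpos (convex_Icc 0 1)
      · exact fun s _ => (hAd s).continuousAt.continuousWithinAt
      · exact fun s _ => (hAd s).differentiableAt.differentiableWithinAt
      · intro s hs
        have hs' : s ∈ Set.Icc (0:ℝ) 1 := Set.mem_of_mem_of_subset hs
          (by rw [interior_Icc]; exact Set.Ioo_subset_Icc_self)
        rw [(hAd s).deriv]
        have h1sr := honem s hs'
        have hB := hstepB s hs'
        have habs : scD3 f u u v (x + s • v) ≤ 2 * h s * (r / (1 - s * r)) :=
          le_trans (le_abs_self _) hB
        have hhs := hhnn s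
        have key : (1 - s*r)^2 * scD3 f u u v (x + s • v) ≤ 2 * (1 - s*r) * r * h s := by
          calc (1 - s*r)^2 * scD3 f u u v (x + s • v)
              ≤ (1 - s*r)^2 * (2 * h s * (r / (1 - s * r))) := by nlinarith
            _ = 2 * (1 - s*r) * r * h s := by field_simp
        nlinarith
    have := hAmono (Set.mem_Icc.2 ⟨le_refl 0, by norm_num⟩)
      (Set.mem_Icc.2 ⟨by norm_num, le_refl 1⟩) (by norm_num)
    simpa using this
  -- Step C lower : h 0 ≤ ((1-r)^2)⁻¹ * h 1, i.e. (1-r)^2 * h 0 ≤ h 1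
  have hlower : (1 - r)^2 * h 0 ≤ h 1 := by
    have hBd : ∀ s ∈ Set.Icc (0:ℝ) 1, HasDerivAt (fun s => ((1 - s * r)⁻¹)^2 * h s)
        (2 * ((1 - s * r)⁻¹)^1 * (-(-r) / (1 - s*r)^2) * h s
          + ((1 - s * r)⁻¹)^2 * scD3 f u u v (x + s • v)) s := by
      intro s hs
      have h1 : HasDerivAt (fun s : ℝ => 1 - s * r) (-r) s := by
        simpa using ((hasDerivAt_id s).mul_const r).const_sub 1
      exact ((h1.inv (honem s hs).ne').pow 2).mul (hh s)
    have hBmono : MonotoneOn (fun s => ((1 - s * r)⁻¹)^2 * h s) (Set.Icc (0:ℝ) 1) := by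
      apply monotoneOn_of_deriv_nonneg (convex_Icc 0 1)
      · exact fun s hs => (hBd s hs).continuousAt.continuousWithinAt
      · intro s hs
        rw [interior_Icc] at hs
        exact (hBd s (Set.Ioo_subset_Icc_self hs)).differentiableAt.differentiableWithinAt
      · intro s hs
        rw [interior_Icc] at hs
        have hs' := Set.Ioo_subset_Icc_self hs
        rw [(hBd s hs').deriv]
        have h1sr := honem s hs'
        have hB := hstepB s hs'
        have habs : -(2 * h s * (r / (1 - s * r))) ≤ scD3 f u u v (x + s • v) :=
          (abs_le.1 hB).1
        have hhs := hhnn s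
        have hT : -(2 * r * h s) ≤ (1 - s*r) * scD3 f u u v (x + s • v) := by
          have h2 : (1 - s*r) * (-(2 * h s * (r / (1 - s * r))))
              ≤ (1 - s*r) * scD3 f u u v (x + s • v) :=
            mul_le_mul_of_nonneg_left habs h1sr.le
          calc -(2 * r * h s) = (1 - s*r) * (-(2 * h s * (r / (1 - s * r)))) := by
                rw [mul_div_assoc', mul_neg, mul_div_assoc', mul_div_cancel_left₀ _ h1sr.ne']
                ring
            _ ≤ _ := h2
        have heq : 2 * ((1 - s * r)⁻¹)^1 * (-(-r) / (1 - s*r)^2) * h s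
              + ((1 - s * r)⁻¹)^2 * scD3 f u u v (x + s • v)
            = (2*r*h s + (1 - s*r) * scD3 f u u v (x + s • v)) / (1 - s*r)^3 := by
          field_simp
        rw [heq]
        apply div_nonneg (by linarith) (pow_nonneg h1sr.le 3)
    have hkey := hBmono (Set.mem_Icc.2 ⟨le_refl 0, by norm_num⟩)
      (Set.mem_Icc.2 ⟨by norm_num, le_refl 1⟩) (by norm_num)
    simp only [zero_mul, one_mul, sub_zero, inv_one, one_pow] at hkey
    -- hkey : h 0 ≤ ((1 - r)⁻¹)^2 * h 1
    have h1r : (0:ℝ) < 1 - r := by linarith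
    calc (1 - r)^2 * h 0 ≤ (1 - r)^2 * (((1 - r)⁻¹)^2 * h 1) :=
          mul_le_mul_of_nonneg_left hkey (by positivity)
      _ = h 1 := by field_simp
  -- assemble
  have h1eq : h 1 = u ⬝ᵥ hess (x + v) *ᵥ u := by simp [hhdef]
  have h0eq : h 0 = u ⬝ᵥ hess x *ᵥ u := by simp [hhdef]
  constructor
  · rw [← h1eq, ← h0eq]; exact hlower
  · rw [← h1eq, ← h0eq]
    have h1r : (0:ℝ) < (1 - r)^2 := pow_pos (by linarith) 2
    calc h 1 = ((1-r)^2)⁻¹ * ((1-r)^2 * h 1) := by rw [← mul_assoc, inv_mul_cancel₀ h1r.ne', one_mul]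
      _ ≤ ((1-r)^2)⁻¹ * h 0 := mul_le_mul_of_nonneg_left hupper (by positivity)
end Compare
open Matrix

section MatAux
variable {N : ℕ}

lemma vecMul_eq_transpose_mulVec {m l : Type*} [Fintype m] [Fintype l]
    (U : Matrix m l ℝ) (z : m → ℝ) :
    z ᵥ* U = Uᵀ *ᵥ z := by
  rw [← Matrix.vecMul_transpose, Matrix.transpose_transpose]

lemma real_isHermitian_of_isSymm {M : Matrix (Fin N) (Fin N) ℝ} (h : M.IsSymm) :
    M.IsHermitian := by
  have : Mᴴ = Mᵀ := by
    ext i j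
    simp [Matrix.conjTranspose_apply, Matrix.transpose_apply]
  rw [Matrix.IsHermitian, this, h]

lemma dot_cauchy_schwarz (A : Matrix (Fin N) (Fin N) ℝ) (hA : A.IsSymm)
    (hpsd : ∀ z : Fin N → ℝ, 0 ≤ z ⬝ᵥ A *ᵥ z) (a b : Fin N → ℝ) :
    (a ⬝ᵥ A *ᵥ b)^2 ≤ (a ⬝ᵥ A *ᵥ a) * (b ⬝ᵥ A *ᵥ b) := by
  have hba : b ⬝ᵥ A *ᵥ a = a ⬝ᵥ A *ᵥ b := dot_mulVec_symm A hA b a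
  have key : ∀ τ : ℝ, 0 ≤ (b ⬝ᵥ A *ᵥ b) * (τ*τ) + (2*(a ⬝ᵥ A *ᵥ b)) * τ + (a ⬝ᵥ A *ᵥ a) := by
    intro τ
    have h := hpsd (a + τ • b)
    rw [mulVec_add, dotProduct_add, add_dotProduct, add_dotProduct, mulVec_smul,
      dotProduct_smul, smul_dotProduct, smul_dotProduct, dotProduct_smul] at h
    simp only [smul_eq_mul] at h
    rw [hba] at h
    ring_nf at h ⊢
    linarith
  have hd := discrim_le_zero key
  rw [discrim] at hd
  nlinarith [hd]

lemma inv_quadform_le {A B : Matrix (Fin N) (Fin N) ℝ} (hA : A.PosDef) (hB : B.PosDef)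
    (hAs : A.IsSymm) (hBs : B.IsSymm) {c : ℝ} (hc : 0 < c)
    (hle : ∀ z : Fin N → ℝ, c * (z ⬝ᵥ A *ᵥ z) ≤ z ⬝ᵥ B *ᵥ z) (z : Fin N → ℝ) :
    z ⬝ᵥ B⁻¹ *ᵥ z ≤ c⁻¹ * (z ⬝ᵥ A⁻¹ *ᵥ z) := by
  have hAdet : IsUnit A.det := isUnit_iff_ne_zero.2 hA.det_pos.ne'
  have hBdet : IsUnit B.det := isUnit_iff_ne_zero.2 hB.det_pos.ne'
  have hAA : A * A⁻¹ = 1 := Matrix.mul_nonsing_inv A hAdet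
  have hBB : B * B⁻¹ = 1 := Matrix.mul_nonsing_inv B hBdet
  have hApsd : ∀ w : Fin N → ℝ, 0 ≤ w ⬝ᵥ A *ᵥ w := fun w => by
    have := hA.posSemidef.dotProduct_mulVec_nonneg w; simpa using this
  set zB := B⁻¹ *ᵥ z with hzBdef
  set wA := A⁻¹ *ᵥ z with hwAdef
  have hq : z ⬝ᵥ B⁻¹ *ᵥ z = zB ⬝ᵥ B *ᵥ zB := by
    rw [hzBdef, Matrix.mulVec_mulVec, hBB, Matrix.one_mulVec, dotProduct_comm]
  have hwA2 : wA ⬝ᵥ A *ᵥ wA = z ⬝ᵥ A⁻¹ *ᵥ z := by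
    rw [hwAdef]
    conv_lhs => rw [Matrix.mulVec_mulVec, hAA, Matrix.one_mulVec]
    rw [dotProduct_comm]
  have hqeq : wA ⬝ᵥ A *ᵥ zB = z ⬝ᵥ B⁻¹ *ᵥ z := by
    rw [dot_mulVec_symm A hAs]
    conv_lhs => rw [hwAdef, Matrix.mulVec_mulVec, hAA, Matrix.one_mulVec]
    rw [dotProduct_comm]
  have hCS := dot_cauchy_schwarz A hAs hApsd wA zB
  rw [hqeq, hwA2] at hCS
  -- hCS : (z ⬝ᵥ B⁻¹ *ᵥ z)^2 ≤ (z ⬝ᵥ A⁻¹ *ᵥ z) * (zB ⬝ᵥ A *ᵥ zB)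
  have hzBA : zB ⬝ᵥ A *ᵥ zB ≤ c⁻¹ * (z ⬝ᵥ B⁻¹ *ᵥ z) := by
    have h1 := hle zB
    rw [← hq] at h1
    calc zB ⬝ᵥ A *ᵥ zB = c⁻¹ * (c * (zB ⬝ᵥ A *ᵥ zB)) := by field_simp
      _ ≤ c⁻¹ * (z ⬝ᵥ B⁻¹ *ᵥ z) := mul_le_mul_of_nonneg_left h1 (by positivity)
  have hq0 : 0 ≤ z ⬝ᵥ B⁻¹ *ᵥ z := by
    rw [hq]
    have := hB.posSemidef.dotProduct_mulVec_nonneg zB; simpa using this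
  rcases eq_or_lt_of_le hq0 with h0 | h0
  · rw [← h0]
    have hApos : (0:ℝ) ≤ z ⬝ᵥ A⁻¹ *ᵥ z := by
      rw [← hwA2]; exact hApsd wA
    positivity
  · have h2 : (z ⬝ᵥ B⁻¹ *ᵥ z)^2 ≤ (z ⬝ᵥ A⁻¹ *ᵥ z) * (c⁻¹ * (z ⬝ᵥ B⁻¹ *ᵥ z)) := by
      calc (z ⬝ᵥ B⁻¹ *ᵥ z)^2 ≤ (z ⬝ᵥ A⁻¹ *ᵥ z) * (zB ⬝ᵥ A *ᵥ zB) := hCS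
        _ ≤ (z ⬝ᵥ A⁻¹ *ᵥ z) * (c⁻¹ * (z ⬝ᵥ B⁻¹ *ᵥ z)) := by
            apply mul_le_mul_of_nonneg_left hzBA
            rw [← hwA2]; exact hApsd wA
    have hcinv : 0 < c⁻¹ := by positivity
    nlinarith [h2, h0]

lemma diag_quad (d c : Fin N → ℝ) :
    c ⬝ᵥ (Matrix.diagonal d) *ᵥ c = ∑ i, d i * (c i)^2 := by
  rw [dotProduct]
  apply Finset.sum_congr rfl
  intro i _
  rw [Matrix.mulVec_diagonal]
  ring

lemma conj_quad (U D : Matrix (Fin N) (Fin N) ℝ) (z : Fin N → ℝ) :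
    z ⬝ᵥ (U * D * Uᵀ) *ᵥ z = (Uᵀ *ᵥ z) ⬝ᵥ D *ᵥ (Uᵀ *ᵥ z) := by
  calc z ⬝ᵥ (U * D * Uᵀ) *ᵥ z = z ⬝ᵥ U *ᵥ (D *ᵥ (Uᵀ *ᵥ z)) := by
        rw [Matrix.mulVec_mulVec, Matrix.mulVec_mulVec, Matrix.mul_assoc]
    _ = (z ᵥ* U) ⬝ᵥ (D *ᵥ (Uᵀ *ᵥ z)) := dotProduct_mulVec _ _ _
    _ = (Uᵀ *ᵥ z) ⬝ᵥ D *ᵥ (Uᵀ *ᵥ z) := by rw [vecMul_eq_transpose_mulVec]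
end MatAux
open Matrix

lemma isSymm_smul_sub {N : ℕ} (k : ℝ) {A B : Matrix (Fin N) (Fin N) ℝ}
    (hA : A.IsSymm) (hB : B.IsSymm) : (k • A - B).IsSymm := by
  unfold Matrix.IsSymm
  rw [Matrix.transpose_sub, Matrix.transpose_smul, hA, hB]

lemma isSymm_inv {N : ℕ} {A : Matrix (Fin N) (Fin N) ℝ} (hA : A.IsSymm) : (A⁻¹).IsSymm := by
  unfold Matrix.IsSymm
  rw [Matrix.transpose_nonsing_inv, hA]

/-- Let `f` be strictly convex standard self-concordant, `x`
a point, `H := ∇²f(x)`, `P` an `n×N` matrix of full column rank,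
`H_r := Pᵀ H P`, and `Q` the coarse truncated approximation of `H_r` with
parameter `p`.  Let `λ̂ = (∇f(x)ᵀ P Q⁻¹ Pᵀ ∇f(x))^{1/2}` and
`d̂ = −P Q⁻¹ Pᵀ ∇f(x)`.  If `t > 0` satisfies `t λ̂ < 1` and `x⁺ := x + t d̂`,
then `∇²f(x⁺) ⪯ (1 − t λ̂)⁻² ∇²f(x)` and
`[∇²f(x⁺)]⁻¹ ⪯ (1 − t λ̂)⁻² [∇²f(x)]⁻¹` in the Loewner order. -/
theorem stmt12 {n N p : ℕ} (hp : 1 ≤ p) (hpN : p < N) (hNn : N < n)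
    (f : (Fin n → ℝ) → ℝ) (grad : (Fin n → ℝ) → Fin n → ℝ)
    (hess : (Fin n → ℝ) → Matrix (Fin n) (Fin n) ℝ)
    (hf : ContDiff ℝ 3 f)
    (hconv : StrictConvexOn ℝ Set.univ f)
    (hgrad : ∀ x u : Fin n → ℝ, deriv (fun t : ℝ => f (x + t • u)) 0 = grad x ⬝ᵥ u)
    (hhessq : ∀ x u : Fin n → ℝ,
      iteratedDeriv 2 (fun t : ℝ => f (x + t • u)) 0 = u ⬝ᵥ (hess x *ᵥ u))
    (hhsymm : ∀ x, (hess x).IsSymm)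
    (hhpd : ∀ x, (hess x).PosDef)
    (hsc : ∀ x u : Fin n → ℝ, ∀ t : ℝ,
      |iteratedDeriv 3 (fun s : ℝ => f (x + s • u)) t|
        ≤ 2 * iteratedDeriv 2 (fun s : ℝ => f (x + s • u)) t ^ ((3 : ℝ) / 2))
    (hclosed : ∀ c : ℝ, IsClosed {x | f x ≤ c})
    (hbdd : BddBelow (Set.range f))
    (x : Fin n → ℝ)
    (P : Matrix (Fin n) (Fin N) ℝ) (hP : P.rank = N)
    (σ : Fin N → ℝ) (u : Fin N → Fin N → ℝ)
    (hσpos : ∀ i, 0 < σ i)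
    (hσmono : ∀ i j : Fin N, i ≤ j → σ j ≤ σ i)
    (hortho : ∀ i j : Fin N, u i ⬝ᵥ u j = if i = j then (1 : ℝ) else 0)
    (hHreig : ∀ i, (Pᵀ * hess x * P) *ᵥ u i = σ i • u i)
    (Q : Matrix (Fin N) (Fin N) ℝ) (hQsymm : Q.IsSymm)
    (hQeig : ∀ i : Fin N, Q *ᵥ u i = (if (i : ℕ) < p then σ i else σ ⟨p, hpN⟩) • u i)
    (lamhat : ℝ)
    (hlamhat : lamhat = Real.sqrt (grad x ⬝ᵥ (P *ᵥ (Q⁻¹ *ᵥ (Pᵀ *ᵥ grad x)))))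
    (t : ℝ) (ht : 0 < t) (htl : t * lamhat < 1) :
    (((1 - t * lamhat) ^ 2)⁻¹ • hess x
        - hess (x + t • -(P *ᵥ (Q⁻¹ *ᵥ (Pᵀ *ᵥ grad x))))).PosSemidef ∧
    (((1 - t * lamhat) ^ 2)⁻¹ • (hess x)⁻¹
        - (hess (x + t • -(P *ᵥ (Q⁻¹ *ᵥ (Pᵀ *ᵥ grad x)))))⁻¹).PosSemidef := by
  -- analytic facts
  have hd2q : ∀ y w, scD2 f w w y = w ⬝ᵥ hess y *ᵥ w := by
    intro y w
    have h := hhessq y w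
    rw [iteratedDeriv2_line hf y w 0] at h
    simpa using h
  have hdiag : ∀ y w, |scD3 f w w w y| ≤ 2 * (w ⬝ᵥ hess y *ᵥ w) ^ ((3:ℝ)/2) := by
    intro y w
    have h := hsc y w 0
    rw [iteratedDeriv3_line hf y w 0, iteratedDeriv2_line hf y w 0] at h
    have h0 : y + (0:ℝ) • w = y := by simp
    rw [h0, hd2q y w] at h
    exact h
  -- orthogonal diagonalization data
  set U : Matrix (Fin N) (Fin N) ℝ := Matrix.of (fun i j => u j i) with hUdef
  have hUtU : Uᵀ * U = 1 := by
    ext i j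
    rw [Matrix.mul_apply, Matrix.one_apply]
    have hthis := hortho i j
    rw [dotProduct] at hthis
    simpa [hUdef, Matrix.transpose_apply] using hthis
  have hUUt : U * Uᵀ = 1 := mul_eq_one_comm.1 hUtU
  set q : Fin N → ℝ := fun i => if (i:ℕ) < p then σ i else σ ⟨p, hpN⟩ with hqdef
  have hqpos : ∀ i, 0 < q i := by
    intro i
    simp only [hqdef]
    split <;> exact hσpos _
  have hσq : ∀ i, σ i ≤ q i := by
    intro i
    simp only [hqdef]
    split
    · exact le_refl _
    · exact hσmono ⟨p, hpN⟩ i (by simpa [Fin.le_def] using not_lt.1 (by assumption))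
  have hQU : Q * U = U * Matrix.diagonal q := by
    ext i j
    rw [Matrix.mul_apply, Matrix.mul_diagonal]
    have h := congrFun (hQeig j) i
    simp only [Matrix.mulVec, dotProduct, Pi.smul_apply, smul_eq_mul] at h
    simp only [hUdef, Matrix.of_apply, hqdef]
    rw [h]
    ring
  have hHU : (Pᵀ * hess x * P) * U = U * Matrix.diagonal σ := by
    ext i j
    rw [Matrix.mul_apply, Matrix.mul_diagonal]
    have h := congrFun (hHreig j) i
    simp only [Matrix.mulVec, dotProduct, Pi.smul_apply, smul_eq_mul] at h
    simp only [hUdef, Matrix.of_apply]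
    rw [h]
    ring
  have hQinv : Q⁻¹ = U * Matrix.diagonal (fun i => (q i)⁻¹) * Uᵀ := by
    apply Matrix.inv_eq_right_inv
    calc Q * (U * Matrix.diagonal (fun i => (q i)⁻¹) * Uᵀ)
        = (Q * U) * Matrix.diagonal (fun i => (q i)⁻¹) * Uᵀ := by
          rw [← Matrix.mul_assoc, ← Matrix.mul_assoc]
      _ = U * (Matrix.diagonal q * Matrix.diagonal (fun i => (q i)⁻¹)) * Uᵀ := by
          rw [hQU, Matrix.mul_assoc U]
      _ = U * Matrix.diagonal (fun i => q i * (q i)⁻¹) * Uᵀ := by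
          rw [Matrix.diagonal_mul_diagonal]
      _ = U * 1 * Uᵀ := by
          rw [show (fun i => q i * (q i)⁻¹) = fun _ : Fin N => (1:ℝ) from
            funext fun i => mul_inv_cancel₀ (hqpos i).ne', Matrix.diagonal_one]
      _ = U * Uᵀ := by rw [Matrix.mul_one]
      _ = 1 := hUUt
  have hHr : Pᵀ * hess x * P = U * Matrix.diagonal σ * Uᵀ := by
    have h2 := congrArg (fun M => M * Uᵀ) hHU
    rw [Matrix.mul_assoc _ U Uᵀ, hUUt, Matrix.mul_one] at h2
    exact h2
  -- vectors
  set w : Fin N → ℝ := Pᵀ *ᵥ grad x with hwdef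
  set z : Fin N → ℝ := Q⁻¹ *ᵥ w with hzdef
  set c : Fin N → ℝ := Uᵀ *ᵥ w with hcdef
  have hUz : Uᵀ *ᵥ z = Matrix.diagonal (fun i => (q i)⁻¹) *ᵥ c := by
    rw [hzdef, hQinv, Matrix.mulVec_mulVec]
    have hassoc : Uᵀ * (U * Matrix.diagonal (fun i => (q i)⁻¹) * Uᵀ)
        = Matrix.diagonal (fun i => (q i)⁻¹) * Uᵀ := by
      calc Uᵀ * (U * Matrix.diagonal (fun i => (q i)⁻¹) * Uᵀ)
          = (Uᵀ * U) * (Matrix.diagonal (fun i => (q i)⁻¹) * Uᵀ) := by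
            rw [Matrix.mul_assoc U, ← Matrix.mul_assoc]
        _ = Matrix.diagonal (fun i => (q i)⁻¹) * Uᵀ := by rw [hUtU, Matrix.one_mul]
    rw [hassoc, ← Matrix.mulVec_mulVec, ← hcdef]
  have hlam2 : grad x ⬝ᵥ (P *ᵥ z) = ∑ i, (q i)⁻¹ * (c i)^2 := by
    rw [dotProduct_mulVec, vecMul_eq_transpose_mulVec, ← hwdef, hzdef, hQinv, conj_quad,
      ← hcdef, diag_quad]
  have hlam2nn : 0 ≤ ∑ i, (q i)⁻¹ * (c i)^2 :=
    Finset.sum_nonneg (fun i _ => mul_nonneg (inv_nonneg.2 (hqpos i).le) (sq_nonneg _))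
  have hlamnn : 0 ≤ lamhat := by rw [hlamhat]; exact Real.sqrt_nonneg _
  have hlamsq : lamhat^2 = ∑ i, (q i)⁻¹ * (c i)^2 := by
    rw [hlamhat, hlam2]
    exact Real.sq_sqrt hlam2nn
  set dh : Fin n → ℝ := -(P *ᵥ z) with hdhdef
  clear_value dh c z w
  have hdq : dh ⬝ᵥ hess x *ᵥ dh = ∑ i, σ i * ((q i)⁻¹ * c i)^2 := by
    rw [hdhdef]
    rw [Matrix.mulVec_neg, dotProduct_neg, neg_dotProduct, neg_neg]
    have h1 : (P *ᵥ z) ⬝ᵥ hess x *ᵥ (P *ᵥ z) = z ⬝ᵥ (Pᵀ * hess x * P) *ᵥ z := by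
      calc (P *ᵥ z) ⬝ᵥ hess x *ᵥ (P *ᵥ z)
          = (P *ᵥ z) ⬝ᵥ ((hess x * P) *ᵥ z) := by rw [Matrix.mulVec_mulVec]
        _ = ((P *ᵥ z) ᵥ* (hess x * P)) ⬝ᵥ z := dotProduct_mulVec _ _ _
        _ = ((hess x * P)ᵀ *ᵥ (P *ᵥ z)) ⬝ᵥ z := by rw [vecMul_eq_transpose_mulVec]
        _ = ((Pᵀ * hess x) *ᵥ (P *ᵥ z)) ⬝ᵥ z := by rw [Matrix.transpose_mul, hhsymm x]
        _ = (((Pᵀ * hess x) * P) *ᵥ z) ⬝ᵥ z := by rw [Matrix.mulVec_mulVec]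
        _ = z ⬝ᵥ (Pᵀ * hess x * P) *ᵥ z := dotProduct_comm _ _
    rw [h1, hHr, conj_quad, hUz, diag_quad]
    apply Finset.sum_congr rfl
    intro i _
    rw [Matrix.mulVec_diagonal]
  have hsum_le : ∑ i, σ i * ((q i)⁻¹ * c i)^2 ≤ ∑ i, (q i)⁻¹ * (c i)^2 := by
    apply Finset.sum_le_sum
    intro i _
    have hq' := hqpos i
    have h2 : σ i * ((q i)⁻¹)^2 ≤ (q i)⁻¹ := by
      have h3 : q i * ((q i)⁻¹)^2 = (q i)⁻¹ := by
        rw [sq, ← mul_assoc, mul_inv_cancel₀ hq'.ne', one_mul]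
      calc σ i * ((q i)⁻¹)^2 ≤ q i * ((q i)⁻¹)^2 :=
            mul_le_mul_of_nonneg_right (hσq i) (sq_nonneg _)
        _ = (q i)⁻¹ := h3
    calc σ i * ((q i)⁻¹ * c i)^2 = (σ i * ((q i)⁻¹)^2) * (c i)^2 := by ring
      _ ≤ (q i)⁻¹ * (c i)^2 := mul_le_mul_of_nonneg_right h2 (sq_nonneg _)
  have hv_bound : Real.sqrt ((t • dh) ⬝ᵥ hess x *ᵥ (t • dh)) ≤ t * lamhat := by
    have hq1 : (t • dh) ⬝ᵥ hess x *ᵥ (t • dh) = t^2 * (dh ⬝ᵥ hess x *ᵥ dh) := by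
      rw [qsmul]; ring
    rw [hq1, hdq]
    have hle2 : t^2 * (∑ i, σ i * ((q i)⁻¹ * c i)^2) ≤ t^2 * ∑ i, (q i)⁻¹ * (c i)^2 :=
      mul_le_mul_of_nonneg_left hsum_le (sq_nonneg t)
    calc Real.sqrt (t^2 * ∑ i, σ i * ((q i)⁻¹ * c i)^2)
        ≤ Real.sqrt (t^2 * ∑ i, (q i)⁻¹ * (c i)^2) := Real.sqrt_le_sqrt hle2
      _ = Real.sqrt ((t*lamhat)^2) := by rw [mul_pow, hlamsq]
      _ = t * lamhat := Real.sqrt_sq (mul_nonneg ht.le hlamnn)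
  have hcomp := fun uu => hessian_compare hf hd2q hdiag hhsymm hhpd x (t • dh) (t*lamhat)
    htl hv_bound uu
  constructor
  · apply Matrix.PosSemidef.of_dotProduct_mulVec_nonneg
    · apply real_isHermitian_of_isSymm
      exact isSymm_smul_sub _ (hhsymm x) (hhsymm _)
    · intro zz
      have h := (hcomp zz).2
      simp only [star_trivial]
      rw [Matrix.sub_mulVec, Matrix.smul_mulVec, dotProduct_sub, dotProduct_smul,
        smul_eq_mul]
      linarith
  · apply Matrix.PosSemidef.of_dotProduct_mulVec_nonneg
    · apply real_isHermitian_of_isSymm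
      exact isSymm_smul_sub _ (isSymm_inv (hhsymm x)) (isSymm_inv (hhsymm _))
    · intro zz
      have hc2 : (0:ℝ) < (1 - t*lamhat)^2 := pow_pos (by linarith) 2
      have h := inv_quadform_le (hhpd x) (hhpd (x + t • dh)) (hhsymm x) (hhsymm _) hc2
        (fun z' => (hcomp z').1) zz
      simp only [star_trivial]
      rw [Matrix.sub_mulVec, Matrix.smul_mulVec, dotProduct_sub, dotProduct_smul,
        smul_eq_mul]
      linarith
end CalcAux
end
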